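/- arXiv:2510.10907 — 7 statements merged into one kernel-verified Lean document; each statement's English description precedes it below -/
import Mathlib

section
/- Let s > 0, C > 0, and let μ be a (C,s)-Frostman probability measure on ℝ^n that is irreducible in ℝ^n. Then for every 1 ≤ k ≤ n there exist A ≥ 1 and open balls B_0,…,B_k ⊆ ℝ^n such that μ(B_i) > 0 for each i and the product B_0 × ⋯ × B_k is at distance at least 1/A from S_k; in particular, each normalized restriction μ_i = μ|_{B_i}/μ(B_i) is a (C/μ(B_i), s)-Frostman probability measure that is irreducible in ℝ^n. -/
open MeasureTheory Metric Set

noncomputable section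

/-- `ℝⁿ` as a Euclidean space. -/
abbrev Euc (n : ℕ) : Type := EuclideanSpace ℝ (Fin n)

/-- The topological support of a measure on `ℝⁿ`. -/
def msupp {n : ℕ} (μ : Measure (Euc n)) : Set (Euc n) :=
  {x | ∀ r : ℝ, 0 < r → 0 < μ (ball x r)}

/-- `μ` is a `(C, s)`-Frostman measure. -/
def Frostman {n : ℕ} (μ : Measure (Euc n)) (C s : ℝ) : Prop :=
  ∀ (x : Euc n) (r : ℝ), 0 < r → μ (ball x r) ≤ ENNReal.ofReal (C * r ^ s)

/-- `μ` is irreducible in the affine subspace `V`. -/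
def IrreducibleIn {n : ℕ} (μ : Measure (Euc n)) (V : AffineSubspace ℝ (Euc n)) : Prop :=
  ∀ V' : AffineSubspace ℝ (Euc n), V' < V → μ (V' : Set (Euc n)) = 0

/-- `μ` is `(w, τ)`-irreducible in the affine subspace `V`. -/
def WTIrreducible {n : ℕ} (μ : Measure (Euc n)) (V : AffineSubspace ℝ (Euc n)) (w τ : ℝ) : Prop :=
  ∀ H : AffineSubspace ℝ (Euc n), H < V →
    μ (thickening w (H : Set (Euc n))) ≤ ENNReal.ofReal τ * μ (closedBall 0 1)

/-- Measures `μ i` are in `C`-good position: supports in the closed unit ball, and the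
product of the supports is `1/C`-separated from the affinely dependent tuples. -/
def GoodPosition {n : ℕ} {ι : Type} [Fintype ι] (μ : ι → Measure (Euc n)) (C : ℝ) : Prop :=
  (∀ i, msupp (μ i) ⊆ closedBall 0 1) ∧
  ∀ x : ι → Euc n, (∀ i, x i ∈ msupp (μ i)) →
    ∀ y : ι → Euc n, ¬ AffineIndependent ℝ y → 1 / C ≤ dist x y

/-- The measures `μ i`, `i : ι`, span `(σ, K, c)`-thin `(|ι| - 1)`-planes. -/
def SpansThin {n : ℕ} {ι : Type} [Fintype ι] (μ : ι → Measure (Euc n)) (σ K c : ℝ) : Prop :=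
  ∃ G : Set (ι → Euc n), MeasurableSet G ∧
    G ⊆ Set.univ.pi (fun i => msupp (μ i)) ∧
    ENNReal.ofReal c ≤ Measure.pi μ G ∧
    ∀ x ∈ G, ∀ δ : ℝ, 0 < δ → ∀ j : ι,
      μ j (thickening δ ((affineSpan ℝ (Set.range x) : AffineSubspace ℝ (Euc n)) : Set (Euc n))) ≤
        ENNReal.ofReal (K * δ ^ σ)

/-- A set `X ⊆ ℝⁿ` is non-concentrated (NC). -/
def NCSet {n : ℕ} (X : Set (Euc n)) : Prop :=
  ∀ (r : ℕ) (F : Fin r → AffineSubspace ℝ (Euc n)),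
    (∑ i, Module.finrank ℝ (F i).direction) + 1 ≤ n →
    dimH (X \ ⋃ i, (F i : Set (Euc n))) = dimH X

/-- A collection of affine flats is non-concentrated (NC). -/
def NCFlats {n m : ℕ} (V : Fin m → AffineSubspace ℝ (Euc n)) : Prop :=
  ∀ (r : ℕ) (F : Fin r → AffineSubspace ℝ (Euc n)),
    (⋃ j, (V j : Set (Euc n))) ⊆ (⋃ i, (F i : Set (Euc n))) →
    n ≤ ∑ i, Module.finrank ℝ (F i).direction

lemma measure_compl_msupp {n : ℕ} (μ : Measure (Euc n)) : μ (msupp μ)ᶜ = 0 := by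
  obtain ⟨B, hBc, -, hBb⟩ := TopologicalSpace.exists_countable_basis (Euc n)
  have hsub : (msupp μ)ᶜ ⊆ ⋃₀ {b ∈ B | μ b = 0} := by
    intro x hx
    simp only [msupp, mem_compl_iff, mem_setOf_eq, not_forall] at hx
    obtain ⟨r, hr, h0⟩ := hx
    have h0' : μ (ball x r) = 0 := by simpa using h0
    obtain ⟨b, hbB, hxb, hbsub⟩ := hBb.exists_subset_of_mem_open (mem_ball_self hr) isOpen_ball
    exact ⟨b, ⟨hbB, le_antisymm (h0' ▸ measure_mono hbsub) bot_le⟩, hxb⟩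
  refine measure_mono_null hsub (measure_sUnion_null_iff ?_ |>.mpr fun s hs => hs.2)
  exact hBc.mono (sep_subset _ _)

lemma isOpen_setOf_affineIndependent' {n m : ℕ} :
    IsOpen {y : Fin (m + 1) → Euc n | AffineIndependent ℝ y} := by
  have h : {y : Fin (m + 1) → Euc n | AffineIndependent ℝ y}
      = (fun (y : Fin (m + 1) → Euc n) (i : {i : Fin (m + 1) // i ≠ 0}) => y i -ᵥ y 0) ⁻¹'
        {f : {i : Fin (m + 1) // i ≠ 0} → Euc n | LinearIndependent ℝ f} := by
    ext y
    exact affineIndependent_iff_linearIndependent_vsub ℝ y 0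
  rw [h]
  have hc : Continuous fun (y : Fin (m + 1) → Euc n) (i : {i : Fin (m + 1) // i ≠ 0}) =>
      y i -ᵥ y 0 := by
    apply continuous_pi
    intro i
    exact (continuous_apply (A := fun _ : Fin (m + 1) => Euc n) i.1).vsub
      (continuous_apply (A := fun _ : Fin (m + 1) => Euc n) 0)
  exact (isOpen_setOf_linearIndependent (𝕜 := ℝ) (E := Euc n)).preimage hc

set_option maxHeartbeats 1000000 in
/-- Partitioning an irreducible measure. An irreducible `(C,s)`-Frostman
probability measure `μ` on `ℝⁿ` admits, for each `1 ≤ k ≤ n`, balls `B 0, …, B k` of positive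
measure whose product is `1/A`-separated from the affinely dependent tuples; the normalized
restrictions are `(C / μ(B i), s)`-Frostman probability measures irreducible in `ℝⁿ`. -/
theorem stmt_4 {n : ℕ} (s C : ℝ) (hs : 0 < s) (hC : 0 < C)
    (μ : Measure (Euc n)) [IsProbabilityMeasure μ]
    (hF : Frostman μ C s) (hirr : IrreducibleIn μ ⊤)
    (k : ℕ) (hk1 : 1 ≤ k) (hkn : k ≤ n) :
    ∃ A : ℝ, 1 ≤ A ∧ ∃ (ctr : Fin (k + 1) → Euc n) (rad : Fin (k + 1) → ℝ),
      (∀ i, 0 < rad i) ∧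
      (∀ i, 0 < μ (ball (ctr i) (rad i))) ∧
      (∀ x : Fin (k + 1) → Euc n, (∀ i, x i ∈ ball (ctr i) (rad i)) →
        ∀ y : Fin (k + 1) → Euc n, ¬ AffineIndependent ℝ y → 1 / A ≤ dist x y) ∧
      (∀ i, IsProbabilityMeasure
          ((μ (ball (ctr i) (rad i)))⁻¹ • μ.restrict (ball (ctr i) (rad i))) ∧
        Frostman ((μ (ball (ctr i) (rad i)))⁻¹ • μ.restrict (ball (ctr i) (rad i)))
          (C / (μ (ball (ctr i) (rad i))).toReal) s ∧
        IrreducibleIn ((μ (ball (ctr i) (rad i)))⁻¹ • μ.restrict (ball (ctr i) (rad i))) ⊤) := by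
  classical
  -- The support has full measure, hence full affine span.
  have hsupp1 : μ (msupp μ) ≠ 0 := by
    intro h0
    have : (1 : ENNReal) ≤ 0 := by
      calc (1 : ENNReal) = μ univ := (measure_univ).symm
        _ = μ (msupp μ ∪ (msupp μ)ᶜ) := by rw [union_compl_self]
        _ ≤ μ (msupp μ) + μ (msupp μ)ᶜ := measure_union_le _ _
        _ = 0 := by rw [h0, measure_compl_msupp]; simp
    simp at this
  have hspan : affineSpan ℝ (msupp μ) = ⊤ := by
    by_contra hne
    have hlt : affineSpan ℝ (msupp μ) < ⊤ := lt_top_iff_ne_top.mpr hne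
    have h0 : μ (affineSpan ℝ (msupp μ) : Set (Euc n)) = 0 := hirr _ hlt
    exact hsupp1 (le_antisymm (h0 ▸ measure_mono (subset_affineSpan ℝ _)) bot_le)
  -- Extract `k + 1` affinely independent points of the support.
  obtain ⟨t, hts, htspan, htind⟩ := exists_affineIndependent ℝ (Euc n) (msupp μ)
  rw [hspan] at htspan
  have htfin : t.Finite := finite_set_of_fin_dim_affineIndependent ℝ htind
  haveI : Fintype t := htfin.fintype
  have htcard : Fintype.card t = n + 1 := by
    have := (htind.affineSpan_eq_top_iff_card_eq_finrank_add_one).mp (by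
      rwa [Subtype.range_coe])
    rwa [finrank_euclideanSpace_fin] at this
  have e : t ≃ Fin (n + 1) := Fintype.equivFinOfCardEq htcard
  let emb : Fin (k + 1) ↪ t := (Fin.castLEEmb (by omega)).trans e.symm.toEmbedding
  set p : Fin (k + 1) → Euc n := fun i => (emb i : Euc n) with hp
  have hpind : AffineIndependent ℝ p := htind.comp_embedding emb
  have hpsupp : ∀ i, p i ∈ msupp μ := fun i => hts (emb i).2
  -- Separation radius from openness of affine independence.
  obtain ⟨ε, hε, hball⟩ := Metric.isOpen_iff.mp (isOpen_setOf_affineIndependent' (m := k)) p hpind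
  refine ⟨max 1 (3 / ε), le_max_left _ _, p, fun _ => ε / 3, fun _ => by positivity, ?_, ?_, ?_⟩
  · exact fun i => hpsupp i (ε / 3) (by positivity)
  · -- separation from dependent tuples
    intro x hx y hy
    have hxp : dist x p ≤ ε / 3 :=
      dist_pi_le_iff (by positivity) |>.mpr fun i => (le_of_lt (hx i))
    have hpy : ε ≤ dist p y := by
      by_contra hlt
      push_neg at hlt
      exact hy (hball (by simpa [mem_ball, dist_comm] using hlt))
    have hA : 1 / max 1 (3 / ε) ≤ ε / 3 := by
      have h1 : (0 : ℝ) < 3 / ε := by positivity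
      calc 1 / max 1 (3 / ε) ≤ 1 / (3 / ε) :=
            one_div_le_one_div_of_le h1 (le_max_right _ _)
        _ = ε / 3 := one_div_div _ _
    have htri : dist p y ≤ dist p x + dist x y := dist_triangle _ _ _
    have : dist p x ≤ ε / 3 := by rwa [dist_comm]
    linarith
  · -- properties of the normalized restrictions
    intro i
    set Bi := ball (p i) (ε / 3) with hBi
    have hm0 : μ Bi ≠ 0 := (hpsupp i (ε / 3) (by positivity)).ne'
    have hmtop : μ Bi ≠ ⊤ := (lt_of_le_of_lt (measure_mono (subset_univ _))
      (by simp [lt_top_iff_ne_top])).ne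
    have hmpos : 0 < (μ Bi).toReal := ENNReal.toReal_pos hm0 hmtop
    refine ⟨⟨?_⟩, ?_, ?_⟩
    · simp only [Measure.smul_apply, smul_eq_mul, Measure.restrict_apply MeasurableSet.univ,
        univ_inter]
      exact ENNReal.inv_mul_cancel hm0 hmtop
    · intro x r hr
      simp only [Measure.smul_apply, smul_eq_mul]
      have h1 : μ.restrict Bi (ball x r) ≤ μ (ball x r) := Measure.restrict_le_self _
      have h2 : (μ Bi)⁻¹ * μ.restrict Bi (ball x r) ≤ (μ Bi)⁻¹ * ENNReal.ofReal (C * r ^ s) :=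
        mul_le_mul_right (h1.trans (hF x r hr)) _
      refine h2.trans (le_of_eq ?_)
      rw [← ENNReal.ofReal_toReal hmtop, ← ENNReal.ofReal_inv_of_pos hmpos,
        ← ENNReal.ofReal_mul (by positivity)]
      congr 1
      field_simp
      rw [ENNReal.toReal_ofReal hmpos.le, div_self hmpos.ne']
    · intro V' hV'
      simp only [Measure.smul_apply, smul_eq_mul]
      have h1 : μ.restrict Bi (V' : Set (Euc n)) ≤ μ (V' : Set (Euc n)) :=
        Measure.restrict_le_self _
      rw [hirr V' hV'] at h1
      simp [le_antisymm h1 bot_le]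
end
end

section
/- Let V ⊆ ℝ^n be an affine subspace and let μ be a finite Borel measure supported on V ∩ B(0,1) that is irreducible in V. Then for every τ > 0 there exists w = w(τ) > 0 such that μ is (w,τ)-irreducible in V, i.e. μ(H(w)) ≤ τ·μ(B(0,1)) for every proper affine subspace H ⊊ V, where H(w) is the open w-neighborhood of H. -/
open MeasureTheory Metric Set

noncomputable section

open RealInnerProductSpace in
private lemma memWaux {n : ℕ} {V : AffineSubspace ℝ (Euc n)} {p u : Euc n}
    (hu1 : ‖u‖ = 1) (c : ℝ) (x : Euc n) :
    x ∈ V ⊓ AffineSubspace.mk' (p + c • u) (ℝ ∙ u)ᗮ ↔ x ∈ V ∧ ⟪u, x - p⟫ = c := by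
  rw [AffineSubspace.mem_inf_iff, AffineSubspace.mem_mk']
  have h1 : ⟪u, u⟫ = (1 : ℝ) := by rw [real_inner_self_eq_norm_sq, hu1]; norm_num
  constructor
  · rintro ⟨hV, ho⟩
    refine ⟨hV, ?_⟩
    have := Submodule.mem_orthogonal_singleton_iff_inner_right.mp ho
    rw [vsub_eq_sub] at this
    have e : x - (p + c • u) = (x - p) - c • u := by abel
    rw [e, inner_sub_right, real_inner_smul_right, h1] at this
    linarith
  · rintro ⟨hV, hc⟩
    refine ⟨hV, Submodule.mem_orthogonal_singleton_iff_inner_right.mpr ?_⟩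
    rw [vsub_eq_sub]
    have e : x - (p + c • u) = (x - p) - c • u := by abel
    rw [e, inner_sub_right, real_inner_smul_right, h1, hc]
    ring

open RealInnerProductSpace in
private lemma Wlt {n : ℕ} {V : AffineSubspace ℝ (Euc n)} {p u : Euc n}
    (hp : p ∈ V) (hu : u ∈ V.direction) (hu1 : ‖u‖ = 1) (c : ℝ) :
    V ⊓ AffineSubspace.mk' (p + c • u) (ℝ ∙ u)ᗮ < V := by
  refine lt_of_le_of_ne inf_le_left (fun h => ?_)
  have hy : p + (c + 1) • u ∈ V := by
    have := AffineSubspace.vadd_mem_of_mem_direction (V.direction.smul_mem (c + 1) hu) hp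
    simpa [vadd_eq_add, add_comm] using this
  rw [← h, memWaux hu1] at hy
  have h1 : ⟪u, u⟫ = (1 : ℝ) := by rw [real_inner_self_eq_norm_sq, hu1]; norm_num
  have : ⟪u, p + (c + 1) • u - p⟫ = c + 1 := by
    have e : p + (c + 1) • u - p = (c + 1) • u := by abel
    rw [e, real_inner_smul_right, h1]; ring
  rw [this] at hy
  linarith [hy.2]

open RealInnerProductSpace in
private lemma inner_close {n : ℕ} {V : AffineSubspace ℝ (Euc n)} {p u : Euc n}
    (hu1 : ‖u‖ = 1) {c δ : ℝ} {x : Euc n}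
    (hx : x ∈ thickening δ ((V ⊓ AffineSubspace.mk' (p + c • u) (ℝ ∙ u)ᗮ : AffineSubspace ℝ (Euc n)) : Set (Euc n))) :
    |⟪u, x - p⟫ - c| < δ := by
  obtain ⟨y, hy, hxy⟩ := mem_thickening_iff.mp hx
  rw [SetLike.mem_coe, memWaux hu1] at hy
  have e : ⟪u, x - p⟫ - c = ⟪u, x - y⟫ := by
    rw [← hy.2, ← inner_sub_right]
    congr 1
    abel
  calc |⟪u, x - p⟫ - c| = |⟪u, x - y⟫| := by rw [e]
    _ ≤ ‖u‖ * ‖x - y‖ := abs_real_inner_le_norm _ _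
    _ = dist x y := by rw [hu1, one_mul, dist_eq_norm]
    _ < δ := hxy

open RealInnerProductSpace in
private lemma mem_thickeningW {n : ℕ} {V : AffineSubspace ℝ (Euc n)} {p u : Euc n}
    (hp : p ∈ V) (hu : u ∈ V.direction) (hu1 : ‖u‖ = 1) {c ε : ℝ} {x : Euc n}
    (hxV : x ∈ V) (hx : |⟪u, x - p⟫ - c| < ε) :
    x ∈ thickening ε ((V ⊓ AffineSubspace.mk' (p + c • u) (ℝ ∙ u)ᗮ : AffineSubspace ℝ (Euc n)) : Set (Euc n)) := by
  have h1 : ⟪u, u⟫ = (1 : ℝ) := by rw [real_inner_self_eq_norm_sq, hu1]; norm_num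
  set t : ℝ := ⟪u, x - p⟫ - c with ht
  refine mem_thickening_iff.mpr ⟨x - t • u, ?_, ?_⟩
  · rw [SetLike.mem_coe, memWaux hu1]
    constructor
    · have := AffineSubspace.vadd_mem_of_mem_direction (V.direction.smul_mem (-t) hu) hxV
      simpa [vadd_eq_add, sub_eq_add_neg, add_comm, neg_smul] using this
    · have e : x - t • u - p = (x - p) - t • u := by abel
      rw [e, inner_sub_right, real_inner_smul_right, h1, ht]
      ring
  · have e : x - (x - t • u) = t • u := by abel
    rw [dist_eq_norm, e, norm_smul, hu1]
    simpa using hx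
open RealInnerProductSpace in
/-- Modulus of irreducibility. A finite measure supported on `V ∩ B(0,1)`
which is irreducible in `V` is `(w, τ)`-irreducible in `V` for every `τ > 0` and some
`w = w(τ) > 0`. -/
theorem stmt_5 {n : ℕ} (V : AffineSubspace ℝ (Euc n)) (μ : Measure (Euc n))
    [IsFiniteMeasure μ]
    (hsupp : μ (((V : Set (Euc n)) ∩ closedBall 0 1)ᶜ) = 0)
    (hirr : IrreducibleIn μ V) (τ : ℝ) (hτ : 0 < τ) :
    ∃ w : ℝ, 0 < w ∧ WTIrreducible μ V w τ := by
  classical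
  by_cases hB : μ (closedBall (0 : Euc n) 1) = 0
  · refine ⟨1, one_pos, fun H _ => ?_⟩
    have h2 : μ Set.univ = 0 := by
      have h3 := measure_union_le (μ := μ) ((V : Set (Euc n)) ∩ closedBall 0 1)
        (((V : Set (Euc n)) ∩ closedBall 0 1)ᶜ)
      rw [Set.union_compl_self, hsupp, add_zero] at h3
      exact le_antisymm (h3.trans ((measure_mono Set.inter_subset_right).trans hB.le)) zero_le
    have h0 : μ (thickening 1 (H : Set (Euc n))) = 0 :=
      le_antisymm ((measure_mono (Set.subset_univ _)).trans h2.le) zero_le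
    rw [h0]
    exact zero_le
  -- main case
  by_contra hcon
  push_neg at hcon
  have hpos : 0 < ENNReal.ofReal τ * μ (closedBall (0 : Euc n) 1) :=
    ENNReal.mul_pos (by simp [ENNReal.ofReal_pos, hτ]) hB
  have hex : ∀ k : ℕ, ∃ H : AffineSubspace ℝ (Euc n), H < V ∧
      ENNReal.ofReal τ * μ (closedBall 0 1) < μ (thickening (1 / (k + 1 : ℝ)) (H : Set (Euc n))) := by
    intro k
    have h := hcon (1 / (k + 1 : ℝ)) (by positivity)
    rw [WTIrreducible] at h
    push_neg at h
    obtain ⟨H, hH, hμ⟩ := h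
    exact ⟨H, hH, hμ⟩
  choose H hHlt hHμ using hex
  have hHne : ∀ k, ((H k : Set (Euc n))).Nonempty := by
    intro k
    rw [Set.nonempty_iff_ne_empty]
    intro h
    have hk := hHμ k
    rw [h, thickening_empty, measure_empty] at hk
    exact absurd hk (by simp)
  obtain ⟨p, hpH⟩ := hHne 0
  have hpV : p ∈ V := (hHlt 0).le hpH
  have hu : ∀ k, ∃ u : Euc n, u ∈ V.direction ∧ ‖u‖ = 1 ∧ u ∈ (H k).directionᗮ := by
    intro k
    have hdlt : (H k).direction < V.direction :=
      AffineSubspace.direction_lt_of_nonempty (hHlt k) (hHne k)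
    have hsup : (H k).direction ⊔ ((H k).directionᗮ ⊓ V.direction) = V.direction :=
      Submodule.sup_orthogonal_inf_of_hasOrthogonalProjection hdlt.le
    have hne : (H k).directionᗮ ⊓ V.direction ≠ ⊥ := by
      intro h
      rw [h, sup_bot_eq] at hsup
      exact hdlt.ne hsup
    obtain ⟨v, hv, hv0⟩ := Submodule.exists_mem_ne_zero_of_ne_bot hne
    refine ⟨‖v‖⁻¹ • v, ?_, norm_smul_inv_norm hv0, ?_⟩
    · exact V.direction.smul_mem _ (Submodule.mem_inf.mp hv).2
    · exact Submodule.smul_mem _ _ (Submodule.mem_inf.mp hv).1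
  choose u huV hu1 huO using hu
  choose q hqH using hHne
  set c : ℕ → ℝ := fun k => ⟪u k, q k - p⟫ with hc
  set W : ℕ → AffineSubspace ℝ (Euc n) :=
    fun k => V ⊓ AffineSubspace.mk' (p + c k • u k) (ℝ ∙ (u k))ᗮ with hW
  have hsubW : ∀ k, (H k : Set (Euc n)) ⊆ (W k : Set (Euc n)) := by
    intro k x hx
    rw [SetLike.mem_coe, hW, memWaux (hu1 k)]
    refine ⟨(hHlt k).le hx, ?_⟩
    have h1 : ⟪u k, x - q k⟫ = 0 := by
      have hd : x - q k ∈ (H k).direction := by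
        have := AffineSubspace.vsub_mem_direction hx (hqH k)
        rwa [vsub_eq_sub] at this
      exact (Submodule.mem_orthogonal' _ _).mp (huO k) _ hd
    have e : x - p = (x - q k) + (q k - p) := by abel
    rw [e, inner_add_right, h1, zero_add]
  have hsplit : ∀ S T : Set (Euc n), μ S ≤ μ (S ∩ T) + μ Tᶜ := by
    intro S T
    refine (measure_mono fun x hx => ?_).trans (measure_union_le _ _)
    by_cases h : x ∈ T
    · exact Or.inl ⟨hx, h⟩
    · exact Or.inr h
  have hμW : ∀ k : ℕ, ENNReal.ofReal τ * μ (closedBall 0 1) <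
      μ (thickening (1 / (k + 1 : ℝ)) (W k : Set (Euc n))) := fun k =>
    lt_of_lt_of_le (hHμ k) (measure_mono (thickening_subset_of_subset _ (hsubW k)))
  have hcbd : ∀ k, |c k| ≤ 2 + ‖p‖ := by
    intro k
    have hne : (thickening (1 / (k + 1 : ℝ)) (W k : Set (Euc n)) ∩
        ((V : Set (Euc n)) ∩ closedBall 0 1)).Nonempty := by
      by_contra h
      rw [Set.not_nonempty_iff_eq_empty] at h
      have := (hsplit (thickening (1 / (k + 1 : ℝ)) (W k : Set (Euc n)))
        ((V : Set (Euc n)) ∩ closedBall 0 1))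
      rw [h, measure_empty, zero_add, hsupp] at this
      exact absurd (lt_of_lt_of_le (hμW k) this) (by simp)
    obtain ⟨x, hxth, hxV, hxB⟩ := hne
    have h2 : |⟪u k, x - p⟫ - c k| < 1 / (k + 1 : ℝ) := inner_close (hu1 k) hxth
    have h3 : (1 : ℝ) / (k + 1) ≤ 1 := by
      rw [div_le_one (by positivity)]
      linarith [Nat.cast_nonneg (α := ℝ) k]
    have h4 : |⟪u k, x - p⟫| ≤ ‖x - p‖ := by
      calc |⟪u k, x - p⟫| ≤ ‖u k‖ * ‖x - p‖ := abs_real_inner_le_norm _ _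
        _ = ‖x - p‖ := by rw [hu1 k, one_mul]
    have hx1 : ‖x‖ ≤ 1 := mem_closedBall_zero_iff.mp hxB
    have h5 : ‖x - p‖ ≤ ‖x‖ + ‖p‖ := norm_sub_le _ _
    have h6 : |c k| ≤ |⟪u k, x - p⟫ - c k| + |⟪u k, x - p⟫| := by
      have : c k = ⟪u k, x - p⟫ - (⟪u k, x - p⟫ - c k) := by ring
      calc |c k| = |⟪u k, x - p⟫ - (⟪u k, x - p⟫ - c k)| := by rw [← this]
        _ ≤ |⟪u k, x - p⟫| + |⟪u k, x - p⟫ - c k| := abs_sub _ _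
        _ = _ := by ring
    linarith
  set M : ℝ := 2 + ‖p‖ with hM
  have hKc : IsCompact ((Metric.sphere (0 : Euc n) 1 ∩ (V.direction : Set (Euc n))) ×ˢ
      (Set.Icc (-M) M)) :=
    ((isCompact_sphere 0 1).inter_right V.direction.closed_of_finiteDimensional).prod isCompact_Icc
  have hmemK : ∀ k, (u k, c k) ∈ (Metric.sphere (0 : Euc n) 1 ∩ (V.direction : Set (Euc n))) ×ˢ
      (Set.Icc (-M) M) := by
    intro k
    refine ⟨⟨?_, huV k⟩, ?_⟩
    · rw [mem_sphere_zero_iff_norm]; exact hu1 k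
    · exact abs_le.mp (hcbd k)
  obtain ⟨a, haK, φ, hφm, hφt⟩ := hKc.tendsto_subseq hmemK
  have ha1 : ‖a.1‖ = 1 := mem_sphere_zero_iff_norm.mp haK.1.1
  have ha1d : a.1 ∈ V.direction := haK.1.2
  have htu : Filter.Tendsto (fun k => u (φ k)) Filter.atTop (nhds a.1) :=
    (continuous_fst.tendsto a).comp hφt
  have htc : Filter.Tendsto (fun k => c (φ k)) Filter.atTop (nhds a.2) :=
    (continuous_snd.tendsto a).comp hφt
  set Winf : AffineSubspace ℝ (Euc n) :=
    V ⊓ AffineSubspace.mk' (p + a.2 • a.1) (ℝ ∙ a.1)ᗮ with hWinf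
  have hWlt : Winf < V := Wlt hpV ha1d ha1 a.2
  have hclaim : ∀ ε : ℝ, 0 < ε →
      ENNReal.ofReal τ * μ (closedBall 0 1) ≤ μ (thickening ε (Winf : Set (Euc n))) := by
    intro ε hε
    set err : ℕ → ℝ := fun k =>
      1 / (φ k + 1 : ℝ) + (1 + ‖p‖) * ‖u (φ k) - a.1‖ + |c (φ k) - a.2| with herrdef
    have herr : Filter.Tendsto err Filter.atTop (nhds 0) := by
      have h1 : Filter.Tendsto (fun k => 1 / (φ k + 1 : ℝ)) Filter.atTop (nhds 0) :=
        tendsto_one_div_add_atTop_nhds_zero_nat.comp hφm.tendsto_atTop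
      have h2 : Filter.Tendsto (fun k => (1 + ‖p‖) * ‖u (φ k) - a.1‖) Filter.atTop (nhds 0) := by
        have := ((htu.sub_const a.1).norm).const_mul (1 + ‖p‖)
        simpa using this
      have h3 : Filter.Tendsto (fun k => |c (φ k) - a.2|) Filter.atTop (nhds 0) := by
        have := (htc.sub_const a.2).abs
        simpa using this
      simpa only [add_zero] using (h1.add h2).add h3
    obtain ⟨k, hk⟩ := (herr.eventually_lt_const hε).exists
    have hss : thickening (1 / (φ k + 1 : ℝ)) (W (φ k) : Set (Euc n)) ∩
        ((V : Set (Euc n)) ∩ closedBall 0 1) ⊆ thickening ε (Winf : Set (Euc n)) := by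
      rintro x ⟨hxth, hxV, hxB⟩
      have h2 : |⟪u (φ k), x - p⟫ - c (φ k)| < 1 / (φ k + 1 : ℝ) :=
        inner_close (hu1 (φ k)) hxth
      have hx1 : ‖x‖ ≤ 1 := mem_closedBall_zero_iff.mp hxB
      have hxp : ‖x - p‖ ≤ 1 + ‖p‖ := (norm_sub_le _ _).trans (by linarith)
      have e1 : ⟪a.1, x - p⟫ - a.2 =
          (⟪u (φ k), x - p⟫ - c (φ k)) + ⟪a.1 - u (φ k), x - p⟫ + (c (φ k) - a.2) := by
        rw [inner_sub_left]; ring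
      have e2 : |⟪a.1 - u (φ k), x - p⟫| ≤ (1 + ‖p‖) * ‖u (φ k) - a.1‖ := by
        calc |⟪a.1 - u (φ k), x - p⟫| ≤ ‖a.1 - u (φ k)‖ * ‖x - p‖ := abs_real_inner_le_norm _ _
          _ ≤ ‖a.1 - u (φ k)‖ * (1 + ‖p‖) := by
              exact mul_le_mul_of_nonneg_left hxp (norm_nonneg _)
          _ = (1 + ‖p‖) * ‖u (φ k) - a.1‖ := by rw [norm_sub_rev]; ring
      have hbound : |⟪a.1, x - p⟫ - a.2| < ε := by
        have t1 := abs_add_le (⟪u (φ k), x - p⟫ - c (φ k) + ⟪a.1 - u (φ k), x - p⟫)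
          (c (φ k) - a.2)
        have t2 := abs_add_le (⟪u (φ k), x - p⟫ - c (φ k)) (⟪a.1 - u (φ k), x - p⟫)
        rw [e1]
        have hkk : err k < ε := hk
        rw [herrdef] at hkk
        simp only at hkk
        calc |⟪u (φ k), x - p⟫ - c (φ k) + ⟪a.1 - u (φ k), x - p⟫ + (c (φ k) - a.2)|
            ≤ |⟪u (φ k), x - p⟫ - c (φ k) + ⟪a.1 - u (φ k), x - p⟫| + |c (φ k) - a.2| := t1
          _ ≤ |⟪u (φ k), x - p⟫ - c (φ k)| + |⟪a.1 - u (φ k), x - p⟫| + |c (φ k) - a.2| := by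
              linarith
          _ < ε := by linarith
      exact mem_thickeningW hpV ha1d ha1 hxV hbound
    calc ENNReal.ofReal τ * μ (closedBall 0 1)
        ≤ μ (thickening (1 / (φ k + 1 : ℝ)) (W (φ k) : Set (Euc n))) := (hμW (φ k)).le
      _ ≤ μ (thickening (1 / (φ k + 1 : ℝ)) (W (φ k) : Set (Euc n)) ∩
            ((V : Set (Euc n)) ∩ closedBall 0 1)) +
          μ (((V : Set (Euc n)) ∩ closedBall 0 1)ᶜ) := hsplit _ _
      _ = μ (thickening (1 / (φ k + 1 : ℝ)) (W (φ k) : Set (Euc n)) ∩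
            ((V : Set (Euc n)) ∩ closedBall 0 1)) := by rw [hsupp, add_zero]
      _ ≤ μ (thickening ε (Winf : Set (Euc n))) := measure_mono hss
  have hWset : (Winf : Set (Euc n)) = ⋂ m : ℕ, thickening (1 / (m + 1 : ℝ)) (Winf : Set (Euc n)) := by
    have hcl : IsClosed (Winf : Set (Euc n)) := Winf.closed_of_finiteDimensional
    conv_lhs => rw [← hcl.closure_eq]
    have hs₀ : (Set.range fun m : ℕ => 1 / (m + 1 : ℝ)) ⊆ Set.Ioi 0 := by
      rintro x ⟨m, rfl⟩
      exact Set.mem_Ioi.mpr (by positivity)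
    have hs : ∀ δ : ℝ, 0 < δ →
        ((Set.range fun m : ℕ => 1 / (m + 1 : ℝ)) ∩ Set.Ioc 0 δ).Nonempty := by
      intro δ hδ
      obtain ⟨m, hm⟩ := exists_nat_one_div_lt hδ
      exact ⟨1 / (m + 1 : ℝ), ⟨m, rfl⟩, by positivity, hm.le⟩
    rw [closure_eq_iInter_thickening' _ _ hs₀ hs, Set.biInter_range]
  have hanti : Antitone fun m : ℕ => thickening (1 / (m + 1 : ℝ)) (Winf : Set (Euc n)) := by
    intro i j hij
    apply thickening_mono
    have hij' : (i : ℝ) ≤ (j : ℝ) := by exact_mod_cast hij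
    exact one_div_le_one_div_of_le (by positivity) (by linarith)
  have hμWinf : μ (Winf : Set (Euc n)) =
      ⨅ m : ℕ, μ (thickening (1 / (m + 1 : ℝ)) (Winf : Set (Euc n))) := by
    conv_lhs => rw [hWset]
    exact hanti.measure_iInter
      (fun m => isOpen_thickening.measurableSet.nullMeasurableSet) ⟨0, measure_ne_top μ _⟩
  have hge : ENNReal.ofReal τ * μ (closedBall 0 1) ≤ μ (Winf : Set (Euc n)) := by
    rw [hμWinf]
    exact le_iInf fun m => hclaim _ (by positivity)
  rw [hirr _ hWlt] at hge
  exact absurd hge hpos.not_ge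
end
end

section
/- Let V_1,…,V_m ⊆ ℝ^n be affine flats with n_j = dim V_j ≥ 1, fix an orthonormal basis of the linearization of each V_j, and for each j ∈ [m] and i ∈ [n_j] let μ_{j,i} be a nonzero measure on V_j ∩ B(0,1) that is irreducible in V_j. Then there exist c > 0 and open balls B_{j,i} ⊆ ℝ^n with μ_{j,i}(B_{j,i}) > 0 such that for each j the product B_{j,1} × ⋯ × B_{j,n_j} is at distance at least c from the set of affinely dependent n_j-tuples in (ℝ^n)^{n_j}, and the collection of restricted measures (μ_{j,i}|_{B_{j,i}} : j ∈ [m], i ∈ [n_j]) is in c-stable position with respect to V_1,…,V_m. -/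
open MeasureTheory Metric Set

noncomputable section

open Matrix in
/-- The lift `x ↦ (x, 1) ∈ ℝ^{n+1}` of a point of `ℝⁿ`. -/
def liftPt {n : ℕ} (x : Euc n) : Fin (n + 1) → ℝ := Fin.snoc (fun i => x i) 1

/-- `M_r(M) ≥ c`: some `r × r` minor of `M` has absolute value at least `c`. -/
def MrGe {N : ℕ} {ι : Type} (M : Matrix (Fin N) ι ℝ) (r : ℕ) (c : ℝ) : Prop :=
  ∃ (ρ : Fin r → Fin N) (γ : Fin r → ι),
    Function.Injective ρ ∧ Function.Injective γ ∧ c ≤ |(M.submatrix ρ γ).det|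

/-- The matrix `(B_Ī(x̄), A_J)`: the columns are the lifted points `(x_{j,i}, 1)` for
`(j,i) ∈ Ī` together with the columns of the matrices `A j` for `j ∈ J`. -/
def BA {n m : ℕ} (nvec : Fin m → ℕ)
    (A : ∀ j, Matrix (Fin (n + 1)) (Fin (nvec j + 1)) ℝ)
    (Ibar : Finset (Σ j : Fin m, Fin (nvec j))) (J : Finset (Fin m))
    (x : (Σ j : Fin m, Fin (nvec j)) → Euc n) :
    Matrix (Fin (n + 1)) ({p // p ∈ Ibar} ⊕ Σ j : {j : Fin m // j ∈ J}, Fin (nvec j.1 + 1)) ℝ :=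
  Matrix.of fun r => Sum.elim (fun p => liftPt (x p.1) r) (fun q => A q.1.1 r q.2)

/-- A collection of measures, encoded via their supports `supp (j, i) ⊆ V j`, is in `c`-stable
position with respect to the flats `V j` (whose linearizations have orthonormal bases given by
the columns of the matrices `A j`). -/
def CStable {n m : ℕ} (nvec : Fin m → ℕ)
    (A : ∀ j, Matrix (Fin (n + 1)) (Fin (nvec j + 1)) ℝ)
    (supp : (Σ j : Fin m, Fin (nvec j)) → Set (Euc n)) (c : ℝ) : Prop :=
  ∀ (Ibar : Finset (Σ j : Fin m, Fin (nvec j))) (J : Finset (Fin m)),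
    ∃ r : ℕ, ∀ x : (Σ j : Fin m, Fin (nvec j)) → Euc n, (∀ p, x p ∈ supp p) →
      (BA nvec A Ibar J x).rank = r ∧ MrGe (BA nvec A Ibar J x) r c

lemma exists_msupp_diff {n : ℕ} {μ : Measure (Euc n)} (hμ : μ ≠ 0) {T : Set (Euc n)}
    (hT : μ T = 0) : ∃ x ∈ msupp μ, x ∉ T := by
  by_contra h
  push_neg at h
  have : (univ : Set (Euc n)) ⊆ (msupp μ)ᶜ ∪ T := by
    intro x _
    by_cases hx : x ∈ msupp μ
    · exact Or.inr (h x hx)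
    · exact Or.inl hx
  have : μ univ = 0 := measure_mono_null this (measure_union_null (measure_compl_msupp μ) hT)
  exact hμ (by ext s; exact le_antisymm ((measure_mono (subset_univ s)).trans this.le) bot_le)

lemma msupp_nonempty {n : ℕ} {μ : Measure (Euc n)} (hμ : μ ≠ 0) : (msupp μ).Nonempty := by
  obtain ⟨x, hx, -⟩ := exists_msupp_diff hμ (T := ∅) (by simp)
  exact ⟨x, hx⟩

lemma msupp_subset_of_closed {n : ℕ} {μ : Measure (Euc n)} {S : Set (Euc n)}
    (hS : IsClosed S) (h : μ Sᶜ = 0) : msupp μ ⊆ S := by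
  intro x hx
  by_contra hxS
  obtain ⟨r, hr, hball⟩ := Metric.isOpen_iff.1 hS.isOpen_compl x hxS
  have := hx r hr
  rw [measure_mono_null hball h] at this
  exact lt_irrefl _ this

lemma msupp_restrict_subset {n : ℕ} (μ : Measure (Euc n)) (B : Set (Euc n)) :
    msupp (μ.restrict B) ⊆ msupp μ :=
  fun x hx r hr => lt_of_lt_of_le (hx r hr) (Measure.restrict_le_self _)

lemma msupp_restrict_ball_subset {n : ℕ} (μ : Measure (Euc n)) (c : Euc n) (R : ℝ) :
    msupp (μ.restrict (ball c R)) ⊆ closedBall c R := by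
  refine msupp_subset_of_closed isClosed_closedBall ?_
  rw [Measure.restrict_apply (measurableSet_closedBall.compl)]
  have : (closedBall c R)ᶜ ∩ ball c R = ∅ := by
    ext y; simp only [mem_inter_iff, mem_compl_iff, mem_closedBall, mem_ball, mem_empty_iff_false,
      iff_false, not_and, not_lt]
    exact fun hy => le_of_lt (lt_of_not_ge hy)
  rw [this, measure_empty]

-- (B) zero locus of an affine functional inside an affine subspace
def affZero {n : ℕ} (W : AffineSubspace ℝ (Euc n)) (f : (Euc n) →ᵃ[ℝ] ℝ) :
    AffineSubspace ℝ (Euc n) where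
  carrier := {z | z ∈ W ∧ f z = 0}
  smul_vsub_vadd_mem' := by
    rintro c p₁ p₂ p₃ ⟨h1, h1'⟩ ⟨h2, h2'⟩ ⟨h3, h3'⟩
    refine ⟨W.smul_vsub_vadd_mem c h1 h2 h3, ?_⟩
    have : f (c • (p₁ -ᵥ p₂) +ᵥ p₃) = c • (f p₁ -ᵥ f p₂) +ᵥ f p₃ := by
      rw [f.map_vadd, f.linear.map_smul, AffineMap.linearMap_vsub]
    rw [this]
    simp only [h1', h2', h3', vsub_eq_sub, vadd_eq_add, sub_zero, smul_eq_mul,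
      mul_zero, add_zero]

lemma mem_affZero {n : ℕ} {W : AffineSubspace ℝ (Euc n)} {f : (Euc n) →ᵃ[ℝ] ℝ} {z : Euc n} :
    z ∈ affZero W f ↔ z ∈ W ∧ f z = 0 := Iff.rfl

lemma affZero_lt {n : ℕ} {W : AffineSubspace ℝ (Euc n)} {f : (Euc n) →ᵃ[ℝ] ℝ} {z₀ : Euc n}
    (hz₀ : z₀ ∈ W) (hf : f z₀ ≠ 0) : affZero W f < W := by
  refine lt_of_le_of_ne (fun z hz => hz.1) (fun h => hf ?_)
  have : z₀ ∈ affZero W f := by rw [h]; exact hz₀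
  exact this.2

-- (C) generic point lemma
lemma genericAux {n : ℕ} {ι T : Type} [Fintype ι] [DecidableEq ι] [Fintype T]
    (V : ι → AffineSubspace ℝ (Euc n)) (μ : ι → Measure (Euc n))
    (hne : ∀ p, μ p ≠ 0) (hVs : ∀ p, msupp (μ p) ⊆ V p)
    (hirr : ∀ p, IrreducibleIn (μ p) (V p)) :
    ∀ S : Finset ι, ∀ P : T → (ι → Euc n) → ℝ,
    (∀ t p x, ∃ f : (Euc n) →ᵃ[ℝ] ℝ, ∀ z, P t (Function.update x p z) = f z) →
    (∀ t (x y : ι → Euc n), (∀ p ∈ S, x p = y p) → P t x = P t y) →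
    (∀ t, ∃ x, (∀ p, x p ∈ msupp (μ p)) ∧ P t x ≠ 0) →
    ∃ x, (∀ p, x p ∈ msupp (μ p)) ∧ ∀ t, P t x ≠ 0 := by
  classical
  intro S
  induction S using Finset.induction with
  | empty =>
    intro P haff hdep hwit
    choose x₀ hx₀ using fun p => msupp_nonempty (hne p)
    refine ⟨x₀, hx₀, fun t => ?_⟩
    obtain ⟨xt, hxt, hxt'⟩ := hwit t
    rw [hdep t x₀ xt (by simp)]
    exact hxt'
  | @insert p S' hpS' IH =>
    intro P haff hdep hwit
    choose xw hxw hxw' using hwit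
    -- for each t, an affine functional describing z ↦ P t (update (xw t) p z)
    choose f hf using fun t => haff t p (xw t)
    -- bad sets
    have hlt : ∀ t, affZero (V p) (f t) < V p := by
      intro t
      refine affZero_lt (hVs p (hxw t p)) ?_
      rw [← hf t (xw t p), Function.update_eq_self]
      exact hxw' t
    have hnull : μ p (⋃ t, (affZero (V p) (f t) : Set (Euc n))) = 0 :=
      measure_iUnion_null fun t => hirr p _ (hlt t)
    obtain ⟨z, hz, hz'⟩ := exists_msupp_diff (hne p) hnull
    have hzV : z ∈ V p := hVs p hz
    have hzgood : ∀ t, P t (Function.update (xw t) p z) ≠ 0 := by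
      intro t hPz
      exact hz' (mem_iUnion.2 ⟨t, ⟨hzV, (hf t z).symm.trans hPz⟩⟩)
    -- apply IH to the specialized polynomials
    obtain ⟨x, hx, hx'⟩ := IH (fun t x => P t (Function.update x p z))
      (by
        intro t q x
        by_cases hq : q = p
        · subst hq
          refine ⟨AffineMap.const ℝ (Euc n) (P t (Function.update x q z)), fun w => ?_⟩
          show P t (Function.update (Function.update x q w) q z) = _
          rw [Function.update_idem]
          rfl
        · obtain ⟨g, hg⟩ := haff t q (Function.update x p z)
          refine ⟨g, fun w => ?_⟩
          show P t (Function.update (Function.update x q w) p z) = _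
          rw [Function.update_comm hq, hg])
      (by
        intro t x y hxy
        refine hdep t _ _ ?_
        intro q hq
        rcases Finset.mem_insert.1 hq with h | h
        · subst h; simp
        · have hqp : q ≠ p := fun hh => hpS' (hh ▸ h)
          simp [Function.update_of_ne hqp, hxy q h])
      (by
        intro t
        exact ⟨xw t, hxw t, hzgood t⟩)
    refine ⟨Function.update x p z, ?_, hx'⟩
    intro q
    by_cases hq : q = p
    · subst hq; simpa using hz
    · simpa [Function.update_of_ne hq] using hx q

-- (D) matrix minor lemmas
open Matrix in
lemma extract_li {κ ι : Type} [Fintype ι] {v : ι → (κ → ℝ)} {r : ℕ}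
    (h : r ≤ Module.finrank ℝ (Submodule.span ℝ (Set.range v))) :
    ∃ γ : Fin r → ι, Function.Injective γ ∧ LinearIndependent ℝ (v ∘ γ) := by
  classical
  obtain ⟨b, hbsub, hbspan, hbli⟩ := exists_linearIndependent ℝ (Set.range v)
  have hbfin : b.Finite := (Set.finite_range v).subset hbsub
  haveI : Fintype b := hbfin.fintype
  have hcard : r ≤ Fintype.card b := by
    have := finrank_span_set_eq_card hbli
    rw [hbspan] at this
    rw [← Set.toFinset_card]
    omega
  obtain ⟨e⟩ : Nonempty (Fin r ↪ b) :=
    Function.Embedding.nonempty_of_card_le (by simpa using hcard)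
  have hpre : ∀ a : b, ∃ i : ι, v i = (a : κ → ℝ) := fun a => by
    obtain ⟨i, hi⟩ := hbsub a.2; exact ⟨i, hi⟩
  choose g hg using hpre
  refine ⟨g ∘ e, ?_, ?_⟩
  · intro i i' hii
    have : ((e i : b) : κ → ℝ) = ((e i' : b) : κ → ℝ) := by
      rw [← hg (e i), ← hg (e i')]; exact congrArg v hii
    exact e.injective (Subtype.ext this)
  · have : v ∘ (g ∘ e) = (fun a : b => (a : κ → ℝ)) ∘ e := by
      funext i; exact hg (e i)
    rw [this]
    exact hbli.comp e e.injective

open Matrix in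
lemma det_ne_zero_iff_li {r : ℕ} {D : Matrix (Fin r) (Fin r) ℝ} :
    D.det ≠ 0 ↔ LinearIndependent ℝ Dᵀ := by
  constructor
  · intro hdet
    refine Fintype.linearIndependent_iff.2 ?_
    intro g hg
    by_contra hgne
    push_neg at hgne
    obtain ⟨j, hj⟩ := hgne
    refine hdet (Matrix.exists_mulVec_eq_zero_iff.1 ⟨g, fun h0 => hj (by rw [h0]; rfl), ?_⟩)
    funext i
    have := congrFun hg i
    simpa [Matrix.mulVec, dotProduct, mul_comm] using this
  · intro hli hdet
    obtain ⟨g, hgne, hg⟩ := Matrix.exists_mulVec_eq_zero_iff.2 hdet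
    refine hgne (funext fun j => Fintype.linearIndependent_iff.1 hli g ?_ j)
    funext i
    have := congrFun hg i
    simpa [Matrix.mulVec, dotProduct, mul_comm] using this

open Matrix in
lemma rank_col_select {κ ι : Type} [Fintype κ] [Fintype ι] (A : Matrix κ ι ℝ) {r : ℕ}
    (γ : Fin r → ι) : (A.submatrix id γ).rank ≤ A.rank := by
  rw [Matrix.rank_eq_finrank_span_cols, Matrix.rank_eq_finrank_span_cols]
  apply Submodule.finrank_mono
  apply Submodule.span_mono
  rintro - ⟨j, rfl⟩
  exact ⟨γ j, rfl⟩

open Matrix in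
lemma rank_row_select {N : ℕ} {ι : Type} [Fintype ι] (A : Matrix (Fin N) ι ℝ) {r : ℕ}
    (ρ : Fin r → Fin N) : (A.submatrix ρ id).rank ≤ A.rank := by
  have h1 : (A.submatrix ρ id) = ((Aᵀ.submatrix id ρ))ᵀ := rfl
  rw [h1, Matrix.rank_transpose, ← Matrix.rank_transpose A]
  exact rank_col_select Aᵀ ρ

open Matrix in
lemma rank_ge_of_minor {N : ℕ} {ι : Type} [Fintype ι] [DecidableEq ι]
    (A : Matrix (Fin N) ι ℝ) {r : ℕ} (ρ : Fin r → Fin N) (γ : Fin r → ι)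
    (hdet : (A.submatrix ρ γ).det ≠ 0) : r ≤ A.rank := by
  have h1 : (A.submatrix ρ γ).rank = r := by
    rw [Matrix.rank_of_isUnit _ (Matrix.isUnit_iff_isUnit_det _ |>.2 (isUnit_iff_ne_zero.2 hdet))]
    simp
  have h2 : (A.submatrix ρ γ) = (A.submatrix ρ id).submatrix id γ := rfl
  calc r = (A.submatrix ρ γ).rank := h1.symm
    _ ≤ (A.submatrix ρ id).rank := by rw [h2]; exact rank_col_select _ γ
    _ ≤ A.rank := rank_row_select A ρ

open Matrix in
lemma rank_eq_card_of_li_cols {N : ℕ} {ι : Type} [Fintype ι] {A : Matrix (Fin N) ι ℝ}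
    (h : LinearIndependent ℝ Aᵀ) : A.rank = Fintype.card ι := by
  rw [← Matrix.rank_transpose]
  exact h.rank_matrix

open Matrix in
lemma exists_minor {N : ℕ} {ι : Type} [Fintype ι] (A : Matrix (Fin N) ι ℝ) {r : ℕ}
    (h : r ≤ A.rank) :
    ∃ (ρ : Fin r → Fin N) (γ : Fin r → ι), Function.Injective ρ ∧ Function.Injective γ ∧
      (A.submatrix ρ γ).det ≠ 0 := by
  classical
  -- choose r independent columns
  obtain ⟨γ, hγinj, hγli⟩ := extract_li (v := Aᵀ) (r := r)
    (by rw [Matrix.rank_eq_finrank_span_cols] at h; exact h)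
  set C : Matrix (Fin N) (Fin r) ℝ := A.submatrix id γ with hC
  have hCT : Cᵀ = Aᵀ ∘ γ := rfl
  have hrankC : C.rank = r := by
    have := rank_eq_card_of_li_cols (A := C) (by rw [hCT]; exact hγli)
    simpa using this
  -- choose r independent rows of C
  obtain ⟨ρ, hρinj, hρli⟩ := extract_li (v := (C : Fin N → Fin r → ℝ)) (r := r)
    (by
      have : Cᵀ.rank = Module.finrank ℝ (Submodule.span ℝ (Set.range C)) := by
        rw [Matrix.rank_eq_finrank_span_cols]; rfl
      rw [← this, Matrix.rank_transpose, hrankC])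
  refine ⟨ρ, γ, hρinj, hγinj, ?_⟩
  have hD : (A.submatrix ρ γ) = C.submatrix ρ id := rfl
  rw [hD, ← Matrix.det_transpose]
  rw [det_ne_zero_iff_li]
  have : (C.submatrix ρ id)ᵀᵀ = C ∘ ρ := rfl
  rw [Matrix.transpose_transpose]
  exact hρli

-- (E) lift lemmas
@[simp] lemma liftPt_last {n : ℕ} (x : Euc n) : liftPt x (Fin.last n) = 1 := by
  simp [liftPt]

@[simp] lemma liftPt_castSucc {n : ℕ} (x : Euc n) (i : Fin n) :
    liftPt x (Fin.castSucc i) = x i := by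
  simp [liftPt]

lemma affineIndependent_of_liftPt_li {n : ℕ} {ι : Type} [Fintype ι] {p : ι → Euc n}
    (h : LinearIndependent ℝ (fun i => liftPt (p i))) : AffineIndependent ℝ p := by
  rw [affineIndependent_iff_of_fintype]
  intro w hw hvsub
  have hvsub' : ∑ i, w i • p i = 0 := by
    rwa [Finset.weightedVSub_eq_linear_combination _ hw] at hvsub
  have key : ∑ i, w i • liftPt (p i) = 0 := by
    funext k
    rw [show ((0 : Fin (n+1) → ℝ) k) = 0 from rfl, Finset.sum_apply]
    refine Fin.lastCases ?_ ?_ k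
    · simpa using hw
    · intro k'
      have := congrArg (fun v => EuclideanSpace.proj k' v) hvsub'
      simpa [map_sum] using this
  exact fun i => Fintype.linearIndependent_iff.1 h w key i

lemma exists_li_tuple {n : ℕ} (V : AffineSubspace ℝ (Euc n)) (d : ℕ)
    (hd : d = Module.finrank ℝ V.direction) :
    ∀ (k : ℕ) (μ : Fin k → Measure (Euc n)), k ≤ d →
    (∀ i, μ i ≠ 0) → (∀ i, msupp (μ i) ⊆ V) → (∀ i, IrreducibleIn (μ i) V) →
    ∃ y : Fin k → Euc n, (∀ i, y i ∈ msupp (μ i)) ∧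
      LinearIndependent ℝ (fun i => liftPt (y i)) := by
  intro k
  induction k with
  | zero =>
    intro μ _ _ _ _
    exact ⟨fun i => i.elim0, fun i => i.elim0, linearIndependent_empty_type⟩
  | succ k IH =>
    intro μ hk hne hVs hirr
    obtain ⟨y, hy, hyli⟩ := IH (fun i => μ i.castSucc) (by omega)
      (fun i => hne _) (fun i => hVs _) (fun i => hirr _)
    set W : AffineSubspace ℝ (Euc n) := affineSpan ℝ (Set.range y) with hW
    have hWle : W ≤ V := affineSpan_le.2 (by
      rintro - ⟨i, rfl⟩; exact hVs i.castSucc (hy i))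
    have hWrank : Module.finrank ℝ W.direction < d := by
      rcases Nat.eq_zero_or_pos k with hk0 | hk0
      · subst hk0
        have : (Set.range y) = ∅ := Set.range_eq_empty _
        rw [hW, this]
        have hb : Module.finrank ℝ (⊥ : AffineSubspace ℝ (Euc n)).direction = 0 := by
          rw [AffineSubspace.direction_bot]
          exact finrank_bot ℝ _
        rw [AffineSubspace.span_empty, hb]
        omega
      · have : Module.finrank ℝ (vectorSpan ℝ (Set.range y)) ≤ k - 1 :=
          finrank_vectorSpan_range_le ℝ y (by simp; omega)
        rw [hW, direction_affineSpan]
        omega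
    have hWlt : W < V := by
      refine lt_of_le_of_ne hWle (fun hWV => ?_)
      rw [hWV] at hWrank
      omega
    obtain ⟨z, hz, hz'⟩ := exists_msupp_diff (hne (Fin.last k)) (hirr (Fin.last k) W hWlt)
    refine ⟨(Fin.snoc y z : Fin (k+1) → Euc n), ?_, ?_⟩
    · intro i
      refine Fin.lastCases ?_ ?_ i
      · simpa using hz
      · intro i'; simpa using hy i'
    · have heq : (fun i : Fin (k+1) => liftPt ((Fin.snoc y z : Fin (k+1) → Euc n) i)) =
          Fin.snoc (fun i => liftPt (y i)) (liftPt z) := by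
        funext i
        refine Fin.lastCases ?_ ?_ i <;> simp
      rw [heq, linearIndependent_fin_snoc]
      refine ⟨hyli, fun hmem => ?_⟩
      rw [Submodule.mem_span_range_iff_exists_fun] at hmem
      obtain ⟨c, hc⟩ := hmem
      have hcsum : ∑ i, c i = 1 := by
        have := congrFun hc (Fin.last n)
        rw [Finset.sum_apply] at this
        simpa using this
      have hz2 : z = ∑ i, c i • y i := by
        refine PiLp.ext fun k' => ?_
        have := congrFun hc (Fin.castSucc k')
        rw [Finset.sum_apply] at this
        simp only [Pi.smul_apply, smul_eq_mul, liftPt_castSucc] at this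
        rw [← this]
        have h2 : EuclideanSpace.proj k' (∑ i, c i • y i) = ∑ i, c i * y i k' := by
          rw [map_sum]
          simp [mul_comm]
        rw [show ((∑ x, c x • y x) k') = EuclideanSpace.proj k' (∑ x, c x • y x) from rfl, h2]
      have : z ∈ W := by
        rw [hz2, ← Finset.univ.affineCombination_eq_linear_combination y c hcsum]
        exact affineCombination_mem_affineSpan hcsum y
      exact hz' this

-- (F) affineness and continuity of minors of BA
lemma snoc0_add {n : ℕ} (z w : Euc n) (k : Fin (n + 1)) :
    (Fin.snoc (fun u => z u + w u) (0 : ℝ) : Fin (n+1) → ℝ) k =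
      (Fin.snoc (fun u => z u) (0 : ℝ) : Fin (n+1) → ℝ) k +
        (Fin.snoc (fun u => w u) (0 : ℝ) : Fin (n+1) → ℝ) k := by
  rcases Fin.eq_castSucc_or_eq_last k with ⟨u, hu⟩ | hu <;> subst hu <;> simp

lemma snoc0_smul {n : ℕ} (c : ℝ) (z : Euc n) (k : Fin (n + 1)) :
    (Fin.snoc (fun u => c * z u) (0 : ℝ) : Fin (n+1) → ℝ) k =
      c * (Fin.snoc (fun u => z u) (0 : ℝ) : Fin (n+1) → ℝ) k := by
  rcases Fin.eq_castSucc_or_eq_last k with ⟨u, hu⟩ | hu <;> subst hu <;> simp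

lemma liftPt_decomp {n : ℕ} (z : Euc n) (k : Fin (n + 1)) :
    liftPt z k = (Fin.snoc (fun u => z u) (0 : ℝ) : Fin (n+1) → ℝ) k +
      (Fin.snoc (fun _ : Fin n => (0 : ℝ)) (1 : ℝ) : Fin (n+1) → ℝ) k := by
  rcases Fin.eq_castSucc_or_eq_last k with ⟨u, hu⟩ | hu <;> subst hu <;> simp [liftPt]

lemma det_updateColumn_affine {r n : ℕ} (M : Matrix (Fin r) (Fin r) ℝ) (j₀ : Fin r)
    (ρ : Fin r → Fin (n + 1)) :
    ∃ f : Euc n →ᵃ[ℝ] ℝ,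
      ∀ z : Euc n, (M.updateCol j₀ (fun i => liftPt z (ρ i))).det = f z := by
  classical
  -- the linear part of the column as a function of z
  let L : Euc n →ₗ[ℝ] (Fin r → ℝ) :=
    { toFun := fun z i => (Fin.snoc (fun u => z u) (0 : ℝ) : Fin (n+1) → ℝ) (ρ i)
      map_add' := by
        intro z w
        funext i
        exact snoc0_add z w (ρ i)
      map_smul' := by
        intro c z
        funext i
        exact snoc0_smul c z (ρ i) }
  let c₀ : Fin r → ℝ := fun i => (Fin.snoc (fun _ : Fin n => (0 : ℝ)) (1 : ℝ) : Fin (n+1) → ℝ) (ρ i)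
  have hcol : ∀ z : Euc n, (fun i => liftPt z (ρ i)) = L z + c₀ := by
    intro z
    funext i
    show liftPt z (ρ i) = _
    simp only [Pi.add_apply]
    exact liftPt_decomp z (ρ i)
  -- determinant as a linear function of the column
  let G : (Fin r → ℝ) →ₗ[ℝ] ℝ :=
    { toFun := fun u => (M.updateCol j₀ u).det
      map_add' := fun u v => Matrix.det_updateCol_add M j₀ u v
      map_smul' := fun c u => Matrix.det_updateCol_smul M j₀ c u }
  refine ⟨AffineMap.mk' (fun z => G (L z + c₀)) (G.comp L) 0 ?_, fun z => ?_⟩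
  · intro z
    simp only [vsub_eq_sub, sub_zero, vadd_eq_add, LinearMap.comp_apply]
    rw [map_add, map_add]
    simp
  · rw [AffineMap.coe_mk', hcol z]
    rfl

lemma BA_minor_affine {n m : ℕ} (nvec : Fin m → ℕ)
    (A : ∀ j, Matrix (Fin (n + 1)) (Fin (nvec j + 1)) ℝ)
    (Ibar : Finset (Σ j : Fin m, Fin (nvec j))) (J : Finset (Fin m)) {r : ℕ}
    (ρ : Fin r → Fin (n + 1))
    (γ : Fin r → ({p // p ∈ Ibar} ⊕ Σ j : {j : Fin m // j ∈ J}, Fin (nvec j.1 + 1)))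
    (hγ : Function.Injective γ) (p : Σ j : Fin m, Fin (nvec j))
    (x : (Σ j : Fin m, Fin (nvec j)) → Euc n) :
    ∃ f : Euc n →ᵃ[ℝ] ℝ,
      ∀ z, ((BA nvec A Ibar J (Function.update x p z)).submatrix ρ γ).det = f z := by
  classical
  by_cases hcase : ∃ (j₀ : Fin r) (q : {p' // p' ∈ Ibar}), γ j₀ = Sum.inl q ∧ q.1 = p
  · obtain ⟨j₀, q, hγj₀, hqp⟩ := hcase
    obtain ⟨f, hf⟩ := det_updateColumn_affine ((BA nvec A Ibar J x).submatrix ρ γ) j₀ ρ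
    refine ⟨f, fun z => ?_⟩
    rw [← hf z]
    congr 1
    ext i j
    by_cases hj : j = j₀
    · subst hj
      rw [Matrix.updateCol_self]
      simp only [Matrix.submatrix_apply, hγj₀, BA, Matrix.of_apply, Sum.elim_inl]
      rw [hqp, Function.update_self]
    · rw [Matrix.updateCol_ne hj]
      simp only [Matrix.submatrix_apply]
      rcases hγj : γ j with q' | q'
      · have hq' : q'.1 ≠ p := by
          intro hq'p
          apply hj
          apply hγ
          rw [hγj₀, hγj]
          congr 1
          exact Subtype.ext (hq'p.trans hqp.symm)
        simp only [BA, Matrix.of_apply, Sum.elim_inl]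
        rw [Function.update_of_ne hq']
      · simp [BA]
  · refine ⟨AffineMap.const ℝ (Euc n) (((BA nvec A Ibar J x).submatrix ρ γ).det), fun z => ?_⟩
    simp only [AffineMap.const_apply]
    congr 1
    ext i j
    simp only [Matrix.submatrix_apply]
    rcases hγj : γ j with q' | q'
    · have hq' : q'.1 ≠ p := fun hq'p => hcase ⟨j, q', hγj, hq'p⟩
      simp only [BA, Matrix.of_apply, Sum.elim_inl]
      rw [Function.update_of_ne hq']
    · simp [BA]

lemma liftPt_continuous {n : ℕ} (k : Fin (n + 1)) : Continuous fun z : Euc n => liftPt z k := by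
  refine Fin.lastCases ?_ ?_ k
  · simpa using continuous_const
  · intro u
    simpa using (EuclideanSpace.proj (𝕜 := ℝ) u).continuous

lemma BA_minor_continuous {n m : ℕ} (nvec : Fin m → ℕ)
    (A : ∀ j, Matrix (Fin (n + 1)) (Fin (nvec j + 1)) ℝ)
    (Ibar : Finset (Σ j : Fin m, Fin (nvec j))) (J : Finset (Fin m)) {r : ℕ}
    (ρ : Fin r → Fin (n + 1))
    (γ : Fin r → ({p // p ∈ Ibar} ⊕ Σ j : {j : Fin m // j ∈ J}, Fin (nvec j.1 + 1))) :
    Continuous fun x : (Σ j : Fin m, Fin (nvec j)) → Euc n =>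
      ((BA nvec A Ibar J x).submatrix ρ γ).det := by
  refine Continuous.matrix_det ?_
  refine continuous_matrix ?_
  intro i j
  simp only [Matrix.submatrix_apply]
  rcases γ j with q | q
  · simp only [BA, Matrix.of_apply, Sum.elim_inl]
    exact (liftPt_continuous (ρ i)).comp (continuous_apply q.1)
  · simpa [BA] using continuous_const


set_option maxHeartbeats 1000000 in
open Matrix in
/-- Reduction to stable position. Given flats `V j` of dimension `nvec j ≥ 1`
with fixed orthonormal bases `A j` of their linearizations, and irreducible measures `μ j i`
on `V j ∩ B(0,1)`, there are `c > 0` and balls `B_{j,i}` of positive measure such that each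
product `B_{j,1} × ⋯ × B_{j,n_j}` is `c`-separated from the affinely dependent tuples, and the
restricted measures are in `c`-stable position. -/
theorem stmt_7 {n m : ℕ} (V : Fin m → AffineSubspace ℝ (Euc n))
    (nvec : Fin m → ℕ) (hnvec : ∀ j, nvec j = Module.finrank ℝ (V j).direction)
    (hnv1 : ∀ j, 1 ≤ nvec j)
    (A : ∀ j, Matrix (Fin (n + 1)) (Fin (nvec j + 1)) ℝ)
    (hAorth : ∀ j, (A j)ᵀ * A j = 1)
    (hAspan : ∀ j, Submodule.span ℝ (Set.range (A j)ᵀ) =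
      Submodule.span ℝ (liftPt '' ((V j : Set (Euc n)))))
    (μ : ∀ j : Fin m, Fin (nvec j) → Measure (Euc n))
    (hne : ∀ j i, μ j i ≠ 0)
    (hsupp : ∀ j i, μ j i (((V j : Set (Euc n)) ∩ closedBall 0 1)ᶜ) = 0)
    (hirr : ∀ j i, IrreducibleIn (μ j i) (V j)) :
    ∃ c : ℝ, 0 < c ∧
    ∃ (ctr : ∀ j : Fin m, Fin (nvec j) → Euc n) (rad : ∀ j : Fin m, Fin (nvec j) → ℝ),
      (∀ j i, 0 < rad j i) ∧
      (∀ j i, 0 < μ j i (ball (ctr j i) (rad j i))) ∧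
      (∀ j, ∀ x : Fin (nvec j) → Euc n, (∀ i, x i ∈ ball (ctr j i) (rad j i)) →
        ∀ y : Fin (nvec j) → Euc n, ¬ AffineIndependent ℝ y → c ≤ dist x y) ∧
      CStable nvec A
        (fun p => msupp ((μ p.1 p.2).restrict (ball (ctr p.1 p.2) (rad p.1 p.2)))) c := by
  classical
  set ι' := (Σ j : Fin m, Fin (nvec j)) with hι'
  -- basic measure facts
  have hVs : ∀ p : ι', msupp (μ p.1 p.2) ⊆ (V p.1 : Set (Euc n)) := by
    intro p
    refine (msupp_subset_of_closed ?_ (hsupp p.1 p.2)).trans inter_subset_left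
    exact ((V p.1).closed_of_finiteDimensional).inter isClosed_closedBall
  have hne' : ∀ p : ι', μ p.1 p.2 ≠ 0 := fun p => hne p.1 p.2
  have hirr' : ∀ p : ι', IrreducibleIn (μ p.1 p.2) (V p.1) := fun p => hirr p.1 p.2
  -- a base point in the product of supports
  have hx₀ : ∀ p : ι', ∃ z, z ∈ msupp (μ p.1 p.2) := fun p => msupp_nonempty (hne' p)
  choose x₀ hx₀m using hx₀
  -- linearly independent tuples in the supports
  have hLI : ∀ j : Fin m, ∃ y : Fin (nvec j) → Euc n,
      (∀ i, y i ∈ msupp (μ j i)) ∧ LinearIndependent ℝ (fun i => liftPt (y i)) := by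
    intro j
    exact exists_li_tuple (V j) (nvec j) (hnvec j) (nvec j) (μ j) le_rfl
      (hne j) (fun i => hVs ⟨j, i⟩) (hirr j)
  choose yLI hyLIm hyLIli using hLI
  set xLI : ι' → Euc n := fun p => yLI p.1 p.2 with hxLI
  have hxLIm : ∀ p : ι', xLI p ∈ msupp (μ p.1 p.2) := fun p => hyLIm p.1 p.2
  -- the index type of all pairs (Ī, J)
  set T := Finset ι' × Finset (Fin m) with hT
  -- maximal ranks
  set Rset : T → Set ℕ := fun t => {k : ℕ | ∃ x : ι' → Euc n,
    (∀ p, x p ∈ msupp (μ p.1 p.2)) ∧ (BA nvec A t.1 t.2 x).rank = k} with hRset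
  have hRne : ∀ t, (Rset t).Nonempty := fun t => ⟨_, x₀, hx₀m, rfl⟩
  have hRbdd : ∀ t, BddAbove (Rset t) := by
    intro t
    refine ⟨n + 1, ?_⟩
    rintro k ⟨x, -, rfl⟩
    exact (Matrix.rank_le_card_height _).trans (by simp)
  set R : T → ℕ := fun t => sSup (Rset t) with hR
  have hRmem : ∀ t, R t ∈ Rset t := fun t => Nat.sSup_mem (hRne t) (hRbdd t)
  have hRle : ∀ t (x : ι' → Euc n), (∀ p, x p ∈ msupp (μ p.1 p.2)) →
      (BA nvec A t.1 t.2 x).rank ≤ R t := fun t x hx => le_csSup (hRbdd t) ⟨x, hx, rfl⟩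
  -- witnesses of maximal rank and the associated minors
  have hmin : ∀ t : T, ∃ xw : ι' → Euc n, (∀ p, xw p ∈ msupp (μ p.1 p.2)) ∧
      ∃ (ρ : Fin (R t) → Fin (n + 1)) (γ : Fin (R t) → ({p // p ∈ t.1} ⊕
        Σ j : {j : Fin m // j ∈ t.2}, Fin (nvec j.1 + 1))),
      Function.Injective ρ ∧ Function.Injective γ ∧
        ((BA nvec A t.1 t.2 xw).submatrix ρ γ).det ≠ 0 := by
    intro t
    obtain ⟨xw, hxw, hrk⟩ := hRmem t
    obtain ⟨ρ, γ, hρ, hγ, hdet⟩ := exists_minor (BA nvec A t.1 t.2 xw) hrk.ge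
    exact ⟨xw, hxw, ρ, γ, hρ, hγ, hdet⟩
  choose xw hxwm ρ γ hρinj hγinj hdetw using hmin
  -- the minor polynomials
  set P : T → (ι' → Euc n) → ℝ :=
    fun t x => ((BA nvec A t.1 t.2 x).submatrix (ρ t) (γ t)).det with hP
  -- a simultaneous generic point
  obtain ⟨xg, hxgm, hxgP⟩ := genericAux (fun p : ι' => V p.1) (fun p => μ p.1 p.2)
    hne' hVs hirr' Finset.univ P
    (fun t p x => BA_minor_affine nvec A t.1 t.2 (ρ t) (γ t) (hγinj t) p x)
    (fun t x y hxy => by rw [funext fun p => hxy p (Finset.mem_univ p)])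
    (fun t => ⟨xw t, hxwm t, hdetw t⟩)
  -- continuity constants
  have hTne : Nonempty T := inferInstance
  set b : T → ℝ := fun t => |P t xg| with hb
  have hbpos : ∀ t, 0 < b t := fun t => abs_pos.2 (hxgP t)
  have hcont : ∀ t : T, ∃ ε > 0, ∀ x : ι' → Euc n, dist x xg < ε →
      dist (P t x) (P t xg) < b t / 2 := by
    intro t
    have : ContinuousAt (P t) xg := (BA_minor_continuous nvec A t.1 t.2 (ρ t) (γ t)).continuousAt
    obtain ⟨ε, hε, hh⟩ := Metric.continuousAt_iff.1 this (b t / 2) (half_pos (hbpos t))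
    exact ⟨ε, hε, fun x hx => hh hx⟩
  choose ε hεpos hεP using hcont
  set δ : ℝ := Finset.univ.inf' Finset.univ_nonempty (fun t => ε t / 2) with hδ
  have hδpos : 0 < δ := (Finset.lt_inf'_iff _).2 fun t _ => half_pos (hεpos t)
  have hδle : ∀ t, δ ≤ ε t / 2 := fun t => Finset.inf'_le _ (Finset.mem_univ t)
  set cb : ℝ := Finset.univ.inf' Finset.univ_nonempty (fun t => b t / 2) with hcb
  have hcbpos : 0 < cb := (Finset.lt_inf'_iff _).2 fun t _ => half_pos (hbpos t)
  have hcble : ∀ t, cb ≤ b t / 2 := fun t => Finset.inf'_le _ (Finset.mem_univ t)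
  -- the key uniform lower bound on the minors
  have keyP : ∀ t (x : ι' → Euc n), (∀ p, dist (x p) (xg p) ≤ δ) → cb ≤ |P t x| := by
    intro t x hx
    have hdist : dist x xg < ε t := by
      have h1 : dist x xg ≤ δ := (dist_pi_le_iff hδpos.le).2 hx
      have h2 : δ < ε t := lt_of_le_of_lt (hδle t) (by linarith [hεpos t])
      linarith
    have h3 := hεP t x hdist
    rw [Real.dist_eq] at h3
    have h4 : |P t xg| - |P t x| ≤ |P t x - P t xg| := by
      have := abs_sub_abs_le_abs_sub (P t xg) (P t x)
      rwa [abs_sub_comm] at this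
    have : b t / 2 ≤ |P t x| := by
      have hb' : b t = |P t xg| := rfl
      linarith
    linarith [hcble t]
  -- final constants
  set c : ℝ := min cb (δ / 2) with hc
  have hcpos : 0 < c := lt_min hcbpos (half_pos hδpos)
  refine ⟨c, hcpos, fun j i => xg ⟨j, i⟩, fun j i => δ / 2, fun j i => half_pos hδpos, ?_, ?_, ?_⟩
  · -- positive measure of balls
    intro j i
    exact hxgm ⟨j, i⟩ (δ / 2) (half_pos hδpos)
  · -- separation from affinely dependent tuples
    intro j x hx y hy
    by_contra hdxy
    push_neg at hdxy
    apply hy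
    -- the special pair (Ī_j, ∅)
    set Ij : Finset ι' := Finset.univ.map ⟨Sigma.mk j, sigma_mk_injective⟩ with hIj
    set tj : T := (Ij, (∅ : Finset (Fin m))) with htj
    -- the inclusion of columns
    haveI : IsEmpty {j' : Fin m // j' ∈ (∅ : Finset (Fin m))} :=
      ⟨fun a => absurd a.2 (Finset.notMem_empty _)⟩
    have hmemIj : ∀ i : Fin (nvec j), (⟨j, i⟩ : ι') ∈ Ij := by
      intro i
      exact Finset.mem_map.2 ⟨i, Finset.mem_univ i, rfl⟩
    set ιj : Fin (nvec j) → ({p // p ∈ tj.1} ⊕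
        Σ j' : {j' : Fin m // j' ∈ tj.2}, Fin (nvec j'.1 + 1)) :=
      fun i => Sum.inl ⟨⟨j, i⟩, hmemIj i⟩ with hιj
    have hιjinj : Function.Injective ιj := by
      intro a b hab
      have hab' : (⟨j, a⟩ : ι') = ⟨j, b⟩ := by
        simpa only [hιj, Sum.inl.injEq, Subtype.mk.injEq] using hab
      exact @sigma_mk_injective (Fin m) (fun j' => Fin (nvec j')) j a b hab'
    have hcardC : Fintype.card ({p // p ∈ tj.1} ⊕
        Σ j' : {j' : Fin m // j' ∈ tj.2}, Fin (nvec j'.1 + 1)) = nvec j := by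
      have h1 : Fintype.card {p // p ∈ tj.1} = nvec j := by
        rw [Fintype.card_coe]
        simp [htj, hIj]
      have h2 : Fintype.card (Σ j' : {j' : Fin m // j' ∈ tj.2}, Fin (nvec j'.1 + 1)) = 0 :=
        Fintype.card_eq_zero
      rw [Fintype.card_sum, h1, h2]
      omega
    -- R tj = nvec j
    have hRtj : R tj = nvec j := by
      refine le_antisymm ?_ ?_
      · obtain ⟨x', -, hx'⟩ := hRmem tj
        rw [← hx']
        exact (Matrix.rank_le_card_width _).trans hcardC.le
      · refine le_trans ?_ (hRle tj xLI hxLIm)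
        have hsub : ((BA nvec A tj.1 tj.2 xLI).submatrix id ιj).rank = nvec j := by
          have hcols : ((BA nvec A tj.1 tj.2 xLI).submatrix id ιj)ᵀ =
              fun i => liftPt (yLI j i) := rfl
          have := rank_eq_card_of_li_cols (A := (BA nvec A tj.1 tj.2 xLI).submatrix id ιj)
            (by rw [hcols]; exact hyLIli j)
          simpa using this
        rw [← hsub]
        exact rank_col_select _ ιj
      -- the perturbed point
    set xhat : ι' → Euc n := fun p => if h : p.1 = j
      then y (Fin.cast (congrArg nvec h) p.2) else xg p with hxhat
    have hxhatj : ∀ i : Fin (nvec j), xhat ⟨j, i⟩ = y i := by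
      intro i
      simp [hxhat]
    have hxhatd : ∀ p : ι', dist (xhat p) (xg p) ≤ δ := by
      rintro ⟨j', i⟩
      by_cases hj' : j' = j
      · subst hj'
        rw [hxhatj i]
        have h1 : dist (y i) (x i) ≤ dist x y := by
          rw [dist_comm x y]
          exact dist_le_pi_dist y x i
        have h2 : dist (x i) (xg ⟨j', i⟩) ≤ δ / 2 := (le_of_lt (hx i))
        have h3 : dist x y < c := hdxy
        have hcd : c ≤ δ / 2 := min_le_right _ _
        calc dist (y i) (xg ⟨j', i⟩) ≤ dist (y i) (x i) + dist (x i) (xg ⟨j', i⟩) :=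
              dist_triangle _ _ _
          _ ≤ δ := by linarith
      · have : xhat ⟨j', i⟩ = xg ⟨j', i⟩ := by simp [hxhat, hj']
        rw [this, dist_self]
        exact hδpos.le
    -- the minor at xhat is nonzero
    have hPxhat : cb ≤ |P tj xhat| := keyP tj xhat hxhatd
    have hdet : ((BA nvec A tj.1 tj.2 xhat).submatrix (ρ tj) (γ tj)).det ≠ 0 := by
      show P tj xhat ≠ 0
      intro h0
      rw [h0] at hPxhat
      simp at hPxhat
      linarith [hcbpos, hPxhat]
    -- columns are linearly independent
    have hγbij : Function.Bijective (γ tj) := by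
      refine (Fintype.bijective_iff_injective_and_card _).2 ⟨hγinj tj, ?_⟩
      rw [hcardC, Fintype.card_fin, hRtj]
    set eγ := Equiv.ofBijective _ hγbij with heγ
    have hliT : LinearIndependent ℝ (((BA nvec A tj.1 tj.2 xhat).submatrix (ρ tj) (γ tj))ᵀ) := by
      rw [← det_ne_zero_iff_li]
      exact hdet
    have hlicols : LinearIndependent ℝ
        (fun k : Fin (R tj) => (fun r => BA nvec A tj.1 tj.2 xhat r (γ tj k))) := by
      have hfac : (fun k : Fin (R tj) => (fun i => BA nvec A tj.1 tj.2 xhat (ρ tj i) (γ tj k))) =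
          (fun v : Fin (n+1) → ℝ => v ∘ (ρ tj)) ∘
            (fun k : Fin (R tj) => (fun r => BA nvec A tj.1 tj.2 xhat r (γ tj k))) := rfl
      refine LinearIndependent.of_comp (LinearMap.funLeft ℝ ℝ (ρ tj)) ?_
      exact hliT
    have hliy : LinearIndependent ℝ (fun i : Fin (nvec j) => liftPt (y i)) := by
      have hcomp : (fun i : Fin (nvec j) => liftPt (y i)) =
          (fun k : Fin (R tj) => (fun r => BA nvec A tj.1 tj.2 xhat r (γ tj k))) ∘
            (fun i => eγ.symm (ιj i)) := by
        funext i
        have h1 : γ tj (eγ.symm (ιj i)) = ιj i := eγ.apply_symm_apply (ιj i)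
        show liftPt (y i) = fun r => BA nvec A tj.1 tj.2 xhat r (γ tj (eγ.symm (ιj i)))
        rw [h1]
        funext r
        show liftPt (y i) r = liftPt (xhat ⟨j, i⟩) r
        rw [hxhatj i]
      rw [hcomp]
      exact hlicols.comp _ (fun a b hab => hιjinj (eγ.symm.injective hab))
    exact affineIndependent_of_liftPt_li hliy
  · -- CStable
    intro Ibar J
    set t : T := (Ibar, J) with ht
    refine ⟨R t, fun x hxsupp => ?_⟩
    have hxm : ∀ p, x p ∈ msupp (μ p.1 p.2) := fun p =>
      msupp_restrict_subset _ _ (hxsupp p)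
    have hxd : ∀ p, dist (x p) (xg p) ≤ δ := by
      intro p
      have := msupp_restrict_ball_subset (μ p.1 p.2) (xg p) (δ / 2) (hxsupp p)
      rw [mem_closedBall] at this
      linarith
    have hPk : cb ≤ |P t x| := keyP t x hxd
    have hdet : ((BA nvec A t.1 t.2 x).submatrix (ρ t) (γ t)).det ≠ 0 := by
      show P t x ≠ 0
      intro h0
      rw [h0] at hPk
      simp at hPk
      linarith [hcbpos, hPk]
    constructor
    · refine le_antisymm (hRle t x hxm) ?_
      exact rank_ge_of_minor _ (ρ t) (γ t) hdet
    · exact ⟨ρ t, γ t, hρinj t, hγinj t, le_trans (min_le_left _ _) hPk⟩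
end
end

section
/- Let μ_1,…,μ_n be probability measures on ℝ^n and suppose G ⊆ supp μ_1 × ⋯ × supp μ_n is a Borel set with (μ_1×⋯×μ_n)(G) ≥ c > 0 such that for every (x_1,…,x_n) ∈ G, every δ > 0 and every j, μ_j of the δ-neighborhood of the affine span of x_1,…,x_n is at most K·δ^σ (with σ, K > 0). Then the flats W_j = aff(supp μ_j), j = 1,…,n, form an NC collection in ℝ^n: for every finite collection of affine flats U_1,…,U_t with ⋃_{j=1}^n W_j ⊆ ⋃_{i=1}^t U_i one has Σ_{i=1}^t dim U_i ≥ n. -/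
open MeasureTheory Metric Set

noncomputable section

/-- A nonempty affine subspace covered by finitely many affine subspaces is contained
in one of them. -/
lemma union_flats {n : ℕ} : ∀ (t : ℕ) (U : Fin t → AffineSubspace ℝ (Euc n))
    (W : AffineSubspace ℝ (Euc n)), (W : Set (Euc n)).Nonempty →
    (W : Set (Euc n)) ⊆ (⋃ i, (U i : Set (Euc n))) → ∃ i, W ≤ U i := by
  intro t
  induction t with
  | zero =>
      intro U W hne hsub
      obtain ⟨p, hp⟩ := hne
      have := hsub hp
      simp at this
  | succ t ih =>
      intro U W hne hsub
      by_cases hlast : W ≤ U (Fin.last t)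
      · exact ⟨_, hlast⟩
      obtain ⟨q, hqW, hqU⟩ := SetLike.not_le_iff_exists.1 hlast
      have hsub' : (W : Set (Euc n)) ⊆ ⋃ i : Fin t, (U i.castSucc : Set (Euc n)) := by
        intro w hw
        set r : ℝ → Euc n := fun s => s • (q -ᵥ w) +ᵥ w with hrdef
        have hrW : ∀ s, r s ∈ W := fun s => W.smul_vsub_vadd_mem s hqW hw hw
        have hch : ∀ s : ℝ, ∃ i, r s ∈ U i := by
          intro s
          have := hsub (hrW s)
          rwa [Set.mem_iUnion] at this
        choose f hf using hch
        obtain ⟨i, hi⟩ := Finite.exists_infinite_fiber f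
        rw [Set.infinite_coe_iff] at hi
        obtain ⟨s₁, hs₁, s₂, hs₂, hs12⟩ := hi.nontrivial
        have h1 : r s₁ ∈ U i := (show f s₁ = i from hs₁) ▸ hf s₁
        have h2 : r s₂ ∈ U i := (show f s₂ = i from hs₂) ▸ hf s₂
        have hall : ∀ s, r s ∈ U i := by
          intro s
          have hne21 : s₂ - s₁ ≠ 0 := sub_ne_zero.2 (Ne.symm hs12)
          have hkey : r s = ((s - s₁) / (s₂ - s₁)) • (r s₂ -ᵥ r s₁) +ᵥ r s₁ := by
            simp only [hrdef, vsub_eq_sub, vadd_eq_add]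
            rw [add_sub_add_right_eq_sub, ← sub_smul, smul_smul,
              div_mul_cancel₀ _ hne21, ← add_assoc, ← add_smul, sub_add_cancel]
          rw [hkey]
          exact (U i).smul_vsub_vadd_mem _ h2 h1 h1
        have hine : i ≠ Fin.last t := by
          intro hEq
          apply hqU
          have h1' := hall 1
          rw [hEq] at h1'
          simpa [hrdef] using h1'
        obtain ⟨i', hi'⟩ := Fin.exists_castSucc_eq.2 hine
        rw [Set.mem_iUnion]
        refine ⟨i', ?_⟩
        have h0 := hall 0
        rw [← hi'] at h0
        simpa [hrdef] using h0
      obtain ⟨i, hi⟩ := ih (fun i => U i.castSucc) W hne hsub'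
      exact ⟨i.castSucc, hi⟩

/-- A family of points each of which is outside the affine span of the others is
affinely independent. -/
lemma aff_indep_of_not_mem_span {N m : ℕ} (x : Fin N → Euc m)
    (h : ∀ j, x j ∉ affineSpan ℝ (x '' ({j}ᶜ : Set (Fin N)))) : AffineIndependent ℝ x := by
  classical
  rw [affineIndependent_iff]
  intro s w hw hsum j hj
  by_contra hwj
  refine h j ?_
  set s' := s.erase j with hs'
  have hjmem : w j • x j + ∑ k ∈ s', w k • x k = 0 := by
    rw [hs']; exact (Finset.add_sum_erase s (fun k => w k • x k) hj).trans hsum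
  have hw' : w j + ∑ k ∈ s', w k = 0 := by
    rw [hs']; exact (Finset.add_sum_erase s (fun k => w k) hj).trans hw
  set v : Fin N → ℝ := fun k => -(w k) / (w j) with hv
  have hv1 : ∑ k ∈ s', v k = 1 := by
    simp only [hv]
    rw [← Finset.sum_div, Finset.sum_neg_distrib]
    have : ∑ k ∈ s', w k = -(w j) := by linarith
    rw [this, neg_neg, div_self hwj]
  have hvx : ∑ k ∈ s', v k • x k = x j := by
    have step1 : ∑ k ∈ s', v k • x k = (w j)⁻¹ • ∑ k ∈ s', (-(w k)) • x k := by
      rw [Finset.smul_sum]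
      refine Finset.sum_congr rfl fun k _ => ?_
      rw [smul_smul]
      congr 1
      simp only [hv]; ring
    have step2 : ∑ k ∈ s', (-(w k)) • x k = w j • x j := by
      simp only [neg_smul]
      rw [Finset.sum_neg_distrib]
      have h2 : ∑ k ∈ s', w k • x k = -(w j • x j) :=
        eq_neg_of_add_eq_zero_right hjmem
      rw [h2, neg_neg]
    rw [step1, step2, smul_smul, inv_mul_cancel₀ hwj, one_smul]
  -- membership in the span of the other points
  have hmono : (x '' (↑s' : Set (Fin N))) ⊆ x '' ({j}ᶜ : Set (Fin N)) := by
    apply Set.image_mono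
    intro k hk
    simp only [Set.mem_compl_iff, Set.mem_singleton_iff]
    exact Finset.ne_of_mem_erase (show k ∈ s.erase j from hs' ▸ Finset.mem_coe.1 hk)
  refine (affineSpan_mono ℝ hmono) ?_
  let q : {k // k ∈ s'} → Euc m := fun k => x k.1
  have hv1' : ∑ k : {k // k ∈ s'}, v k.1 = 1 := by
    rw [Finset.univ_eq_attach, Finset.sum_attach s' (fun k => v k)]; exact hv1
  have hmem := affineCombination_mem_affineSpan (k := ℝ) hv1' q
  rw [Finset.affineCombination_eq_linear_combination _ _ _ hv1'] at hmem
  have hval : ∑ k : {k // k ∈ s'}, v k.1 • q k = x j := by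
    rw [Finset.univ_eq_attach, Finset.sum_attach s' (fun k => v k • x k)]; exact hvx
  rw [hval] at hmem
  have hrange : Set.range q = x '' (↑s' : Set (Fin N)) := by
    ext y
    constructor
    · rintro ⟨k, rfl⟩; exact ⟨k.1, by simpa using k.2, rfl⟩
    · rintro ⟨k, hk, rfl⟩; exact ⟨⟨k, by simpa using hk⟩, rfl⟩
  rwa [hrange] at hmem

/-- The `δ`-neighborhood of the affine span of the coordinates other than `j` is an open
condition. -/
lemma O_open {m N : ℕ} (j : Fin N) (δ : ℝ) :
    IsOpen {x : Fin N → Euc m | x j ∈ thickening δ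
      ((affineSpan ℝ (x '' ({j}ᶜ : Set (Fin N))) : AffineSubspace ℝ (Euc m)) : Set (Euc m))} := by
  classical
  rw [isOpen_iff_mem_nhds]
  intro x hx
  rw [Set.mem_setOf_eq, Metric.mem_thickening_iff] at hx
  obtain ⟨z, hz, hdz⟩ := hx
  have himg : ∀ (y : Fin N → Euc m), y '' ({j}ᶜ : Set (Fin N)) =
      Set.range (fun k : {k : Fin N // k ≠ j} => y k.1) := by
    intro y
    ext v
    constructor
    · rintro ⟨k, hk, rfl⟩
      exact ⟨⟨k, by simpa using hk⟩, rfl⟩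
    · rintro ⟨k, rfl⟩
      exact ⟨k.1, by simpa using k.2, rfl⟩
  rw [himg] at hz
  have hz' : z ∈ affineSpan ℝ (Set.range (fun k : {k : Fin N // k ≠ j} => x k.1)) := hz
  obtain ⟨w, hw, hzeq⟩ := eq_affineCombination_of_mem_affineSpan_of_fintype hz'
  rw [Finset.affineCombination_eq_linear_combination _ _ _ hw] at hzeq
  set F : (Fin N → Euc m) → ℝ :=
    fun y => dist (y j) (∑ k : {k : Fin N // k ≠ j}, w k • y k.1) with hF
  have hFcont : Continuous F := by
    apply Continuous.dist (continuous_apply j)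
    exact continuous_finset_sum _ fun k _ => (continuous_apply (k.1 : Fin N)).const_smul (w k)
  have hFx : F x < δ := by rw [hF]; simpa [← hzeq] using hdz
  refine Filter.mem_of_superset ((isOpen_lt hFcont continuous_const).mem_nhds hFx) ?_
  intro y hy
  rw [Set.mem_setOf_eq, Metric.mem_thickening_iff]
  refine ⟨∑ k : {k : Fin N // k ≠ j}, w k • y k.1, ?_, hy⟩
  have hmem := affineCombination_mem_affineSpan (k := ℝ) hw
    (fun k : {k : Fin N // k ≠ j} => y k.1)
  rw [Finset.affineCombination_eq_linear_combination _ _ _ hw] at hmem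
  rw [himg]
  exact hmem

/-- Fubini: the set of tuples in `G` whose `j`-th coordinate lies in the affine span of the
other coordinates is null. -/
lemma slice_null {m n : ℕ} (μ : Fin (n + 1) → Measure (Euc m))
    [∀ i, IsProbabilityMeasure (μ i)] (σ K : ℝ) (hσ : 0 < σ) (hK : 0 < K)
    (G : Set (Fin (n + 1) → Euc m)) (hGmeas : MeasurableSet G)
    (hthin : ∀ x ∈ G, ∀ δ : ℝ, 0 < δ → ∀ j,
      μ j (thickening δ
          ((affineSpan ℝ (Set.range x) : AffineSubspace ℝ (Euc m)) : Set (Euc m))) ≤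
        ENNReal.ofReal (K * δ ^ σ))
    (j : Fin (n + 1)) :
    Measure.pi μ (G ∩ {x | x j ∈
      ((affineSpan ℝ (x '' ({j}ᶜ : Set (Fin (n + 1)))) : AffineSubspace ℝ (Euc m)) :
        Set (Euc m))}) = 0 := by
  classical
  set D : Set (Fin (n + 1) → Euc m) := {x | x j ∈
      ((affineSpan ℝ (x '' ({j}ᶜ : Set (Fin (n + 1)))) : AffineSubspace ℝ (Euc m)) :
        Set (Euc m))} with hD
  have key : ∀ δ : ℝ, 0 < δ →
      Measure.pi μ (G ∩ {x : Fin (n + 1) → Euc m | x j ∈ thickening δ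
        ((affineSpan ℝ (x '' ({j}ᶜ : Set (Fin (n + 1)))) : AffineSubspace ℝ (Euc m)) :
          Set (Euc m))}) ≤ ENNReal.ofReal (K * δ ^ σ) := by
    intro δ hδ
    set O : Set (Fin (n + 1) → Euc m) := {x | x j ∈ thickening δ
        ((affineSpan ℝ (x '' ({j}ᶜ : Set (Fin (n + 1)))) : AffineSubspace ℝ (Euc m)) :
          Set (Euc m))} with hO
    set E : Set (Fin (n + 1) → Euc m) := G ∩ O with hEdef
    have hE : MeasurableSet E := hGmeas.inter (O_open j δ).measurableSet
    set e := MeasurableEquiv.piFinSuccAbove (fun _ : Fin (n + 1) => Euc m) j with he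
    have hmp := measurePreserving_piFinSuccAbove μ j
    set s : Set (Euc m × (Fin n → Euc m)) := e.symm ⁻¹' E with hs
    have hsmeas : MeasurableSet s := e.symm.measurable hE
    have hEs : e ⁻¹' s = E := by
      ext x
      simp [hs]
    have h1 : Measure.pi μ E = ((μ j).prod (Measure.pi fun i => μ (j.succAbove i))) s := by
      rw [← hEs]
      exact hmp.measure_preimage hsmeas.nullMeasurableSet
    have hbound : ∀ y : Fin n → Euc m,
        μ j ((fun a => (a, y)) ⁻¹' s) ≤ ENNReal.ofReal (K * δ ^ σ) := by
      intro y
      by_cases hex : ((fun a => (a, y)) ⁻¹' s).Nonempty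
      · obtain ⟨a₀, ha₀⟩ := hex
        have hsymm : ∀ a : Euc m, e.symm (a, y) = j.insertNth a y := by
          intro a
          simp [he, MeasurableEquiv.piFinSuccAbove, Fin.insertNthEquiv]
        have hx₀ : j.insertNth a₀ y ∈ E := by
          have := ha₀
          rw [Set.mem_preimage, hs, Set.mem_preimage, hsymm] at this
          exact this
        have hsub : ((fun a => (a, y)) ⁻¹' s) ⊆ thickening δ
            ((affineSpan ℝ (Set.range (j.insertNth a₀ y)) : AffineSubspace ℝ (Euc m)) :
              Set (Euc m)) := by
          intro a ha
          rw [Set.mem_preimage, hs, Set.mem_preimage, hsymm] at ha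
          have haO : j.insertNth a y ∈ O := ha.2
          rw [hO, Set.mem_setOf_eq, Fin.insertNth_apply_same] at haO
          refine Set.mem_of_mem_of_subset haO (thickening_subset_of_subset δ ?_)
          have h2 : (j.insertNth a y) '' ({j}ᶜ : Set (Fin (n + 1))) ⊆
              Set.range (j.insertNth a₀ y) := by
            rintro _ ⟨k, hk, rfl⟩
            have hkj : k ≠ j := by simpa using hk
            obtain ⟨i, rfl⟩ := Fin.exists_succAbove_eq hkj
            refine ⟨j.succAbove i, ?_⟩
            rw [Fin.insertNth_apply_succAbove, Fin.insertNth_apply_succAbove]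
          exact SetLike.coe_subset_coe.2 (affineSpan_mono ℝ h2)
        calc μ j ((fun a => (a, y)) ⁻¹' s) ≤ μ j (thickening δ
              ((affineSpan ℝ (Set.range (j.insertNth a₀ y)) : AffineSubspace ℝ (Euc m)) :
                Set (Euc m))) := measure_mono hsub
          _ ≤ ENNReal.ofReal (K * δ ^ σ) := hthin _ hx₀.1 δ hδ j
      · rw [Set.not_nonempty_iff_eq_empty.1 hex]
        simp
    calc Measure.pi μ E
        = ((μ j).prod (Measure.pi fun i => μ (j.succAbove i))) s := h1
      _ = ∫⁻ y, μ j ((fun a => (a, y)) ⁻¹' s) ∂(Measure.pi fun i => μ (j.succAbove i)) :=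
          Measure.prod_apply_symm hsmeas
      _ ≤ ∫⁻ _, ENNReal.ofReal (K * δ ^ σ) ∂(Measure.pi fun i => μ (j.succAbove i)) :=
          lintegral_mono hbound
      _ = ENNReal.ofReal (K * δ ^ σ) := by
          rw [lintegral_const, measure_univ, mul_one]
  -- conclude
  have hsub' : ∀ δ : ℝ, 0 < δ → G ∩ D ⊆ G ∩ {x : Fin (n + 1) → Euc m | x j ∈ thickening δ
      ((affineSpan ℝ (x '' ({j}ᶜ : Set (Fin (n + 1)))) : AffineSubspace ℝ (Euc m)) :
        Set (Euc m))} := by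
    intro δ hδ
    refine Set.inter_subset_inter_right _ ?_
    intro x hx
    exact self_subset_thickening hδ _ hx
  refine le_antisymm ?_ zero_le
  refine ENNReal.le_of_forall_pos_le_add fun ε hε _ => ?_
  rw [zero_add]
  set δ : ℝ := ((ε : ℝ) / K) ^ (σ⁻¹ : ℝ) with hδdef
  have hεpos : (0 : ℝ) < (ε : ℝ) := by exact_mod_cast hε
  have hδpos : 0 < δ := Real.rpow_pos_of_pos (div_pos hεpos hK) _
  have hval : K * δ ^ σ = (ε : ℝ) := by
    rw [hδdef, Real.rpow_inv_rpow (le_of_lt (div_pos hεpos hK)) hσ.ne']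
    field_simp
  calc Measure.pi μ (G ∩ D) ≤ ENNReal.ofReal (K * δ ^ σ) :=
        le_trans (measure_mono (hsub' δ hδpos)) (key δ hδpos)
    _ = (ε : ENNReal) := by rw [hval, ENNReal.ofReal_coe_nnreal]

/-- Thin hyperplanes imply NC flats. If `μ 1, …, μ n` admit a
`(σ, K, c)`-thin hyperplanes graph `G` with `c > 0`, then the flats `W j = aff (supp (μ j))`
form an NC collection in `ℝⁿ`. -/
theorem stmt_11 {n : ℕ} (μ : Fin n → Measure (Euc n))
    (hprob : ∀ i, IsProbabilityMeasure (μ i))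
    (σ K c : ℝ) (hσ : 0 < σ) (hK : 0 < K) (hc : 0 < c)
    (G : Set (Fin n → Euc n)) (hGmeas : MeasurableSet G)
    (hGsub : G ⊆ Set.univ.pi fun i => msupp (μ i))
    (hGc : ENNReal.ofReal c ≤ Measure.pi μ G)
    (hthin : ∀ x ∈ G, ∀ δ : ℝ, 0 < δ → ∀ j,
      μ j (thickening δ
          ((affineSpan ℝ (Set.range x) : AffineSubspace ℝ (Euc n)) : Set (Euc n))) ≤
        ENNReal.ofReal (K * δ ^ σ)) :
    ∀ (t : ℕ) (U : Fin t → AffineSubspace ℝ (Euc n)),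
      (⋃ j, ((affineSpan ℝ (msupp (μ j)) : AffineSubspace ℝ (Euc n)) : Set (Euc n))) ⊆
        (⋃ i, (U i : Set (Euc n))) →
      n ≤ ∑ i, Module.finrank ℝ (U i).direction := by
  haveI : ∀ i, IsProbabilityMeasure (μ i) := hprob
  intro t U hcover
  by_contra hcon
  push_neg at hcon
  obtain ⟨n', rfl⟩ : ∃ n', n = n' + 1 := ⟨n - 1, by omega⟩
  -- the support has full measure
  have hfull : ∀ j, (μ j) (msupp (μ j))ᶜ = 0 := by
    intro j
    apply measure_null_of_locally_null
    intro x hx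
    have hx' : ¬ ∀ r : ℝ, 0 < r → 0 < (μ j) (ball x r) := hx
    push_neg at hx'
    obtain ⟨r, hr, hballs⟩ := hx'
    exact ⟨ball x r, mem_nhdsWithin_of_mem_nhds (ball_mem_nhds x hr),
      le_antisymm hballs zero_le⟩
  have hone : ∀ j, (1 : ENNReal) ≤ (μ j) (msupp (μ j)) := by
    intro j
    have h := measure_union_le (μ := μ j) (msupp (μ j)) (msupp (μ j))ᶜ
    rwa [Set.union_compl_self, measure_univ, hfull j, add_zero] at h
  have hsuppne : ∀ j, (msupp (μ j)).Nonempty := by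
    intro j
    apply nonempty_of_measure_ne_zero (μ := μ j)
    intro h0
    have h := hone j
    rw [h0] at h
    simp at h
  -- each affine span of a support is inside a single flat of the cover
  have hmerge : ∀ j, ∃ i, affineSpan ℝ (msupp (μ j)) ≤ U i := by
    intro j
    apply union_flats t U
    · obtain ⟨pt, hpt⟩ := hsuppne j
      exact ⟨pt, subset_affineSpan ℝ _ hpt⟩
    · exact (Set.subset_iUnion (fun j' => ((affineSpan ℝ (msupp (μ j')) :
        AffineSubspace ℝ (Euc (n' + 1))) : Set (Euc (n' + 1)))) j).trans hcover
  choose g hg using hmerge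
  -- a.e. tuple in G is affinely independent
  have hD0 : Measure.pi μ (⋃ j, (G ∩ {x : Fin (n' + 1) → Euc (n' + 1) | x j ∈
      ((affineSpan ℝ (x '' ({j}ᶜ : Set (Fin (n' + 1)))) : AffineSubspace ℝ (Euc (n' + 1))) :
        Set (Euc (n' + 1)))})) = 0 :=
    measure_iUnion_null fun j => slice_null μ σ K hσ hK G hGmeas hthin j
  have hBne : (G \ ⋃ j, {x : Fin (n' + 1) → Euc (n' + 1) | x j ∈
      ((affineSpan ℝ (x '' ({j}ᶜ : Set (Fin (n' + 1)))) : AffineSubspace ℝ (Euc (n' + 1))) :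
        Set (Euc (n' + 1)))}).Nonempty := by
    apply nonempty_of_measure_ne_zero (μ := Measure.pi μ)
    intro h0
    have hGsubB : G ⊆ (G \ ⋃ j, {x : Fin (n' + 1) → Euc (n' + 1) | x j ∈
        ((affineSpan ℝ (x '' ({j}ᶜ : Set (Fin (n' + 1)))) : AffineSubspace ℝ (Euc (n' + 1))) :
          Set (Euc (n' + 1)))}) ∪ ⋃ j, (G ∩ {x : Fin (n' + 1) → Euc (n' + 1) | x j ∈
        ((affineSpan ℝ (x '' ({j}ᶜ : Set (Fin (n' + 1)))) : AffineSubspace ℝ (Euc (n' + 1))) :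
          Set (Euc (n' + 1)))}) := by
      intro y hy
      by_cases hy2 : y ∈ ⋃ j, {x : Fin (n' + 1) → Euc (n' + 1) | x j ∈
          ((affineSpan ℝ (x '' ({j}ᶜ : Set (Fin (n' + 1)))) : AffineSubspace ℝ (Euc (n' + 1))) :
            Set (Euc (n' + 1)))}
      · right
        rw [Set.mem_iUnion] at hy2 ⊢
        obtain ⟨j, hj⟩ := hy2
        exact ⟨j, hy, hj⟩
      · exact Or.inl ⟨hy, hy2⟩
    have hle := (measure_mono (μ := Measure.pi μ) hGsubB).trans (measure_union_le _ _)
    rw [h0, hD0, add_zero] at hle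
    have hpos : (0 : ENNReal) < ENNReal.ofReal c := ENNReal.ofReal_pos.2 hc
    exact absurd (hGc.trans hle) (not_le.2 hpos)
  obtain ⟨x, hxG, hxnotin⟩ := hBne
  have hxnot : ∀ j, x j ∉ affineSpan ℝ (x '' ({j}ᶜ : Set (Fin (n' + 1)))) := by
    intro j hmem
    exact hxnotin (Set.mem_iUnion.2 ⟨j, hmem⟩)
  have hind : AffineIndependent ℝ x := aff_indep_of_not_mem_span x hxnot
  have hxsupp : ∀ j, x j ∈ msupp (μ j) := fun j => (hGsub hxG) j (Set.mem_univ j)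
  classical
  -- pigeonhole
  have hfib : ∑ i : Fin t, (Finset.univ.filter fun j => g j = i).card = n' + 1 := by
    have h := Finset.card_eq_sum_card_fiberwise
      (f := g) (s := Finset.univ) (t := Finset.univ) (fun j _ => Finset.mem_univ (g j))
    rw [Finset.card_univ, Fintype.card_fin] at h
    exact h.symm
  have hex : ∃ i, Module.finrank ℝ (U i).direction + 1 ≤
      (Finset.univ.filter fun j => g j = i).card := by
    by_contra h'
    push_neg at h'
    have hle2 : ∑ i : Fin t, (Finset.univ.filter fun j => g j = i).card ≤
        ∑ i, Module.finrank ℝ (U i).direction :=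
      Finset.sum_le_sum fun i _ => by have := h' i; omega
    omega
  obtain ⟨i, hScard⟩ := hex
  set S := Finset.univ.filter (fun j => g j = i) with hS
  set p : {j // j ∈ S} → Euc (n' + 1) := fun j => x j.1 with hp
  have hindep : AffineIndependent ℝ p := hind.comp_embedding (Function.Embedding.subtype _)
  have hcardS : Fintype.card {j // j ∈ S} = (S.card - 1) + 1 := by
    rw [Fintype.card_coe]; omega
  have hfrank : Module.finrank ℝ (vectorSpan ℝ (Set.range p)) = S.card - 1 :=
    hindep.finrank_vectorSpan hcardS
  have hrangesub : Set.range p ⊆ (U i : Set (Euc (n' + 1))) := by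
    rintro _ ⟨⟨j, hjS⟩, rfl⟩
    have hgj : g j = i := (Finset.mem_filter.1 hjS).2
    have hmem : x j ∈ U (g j) := hg j (subset_affineSpan ℝ _ (hxsupp j))
    rw [hgj] at hmem
    exact hmem
  have hT_le : affineSpan ℝ (Set.range p) ≤ U i := affineSpan_le.2 hrangesub
  have hdirEq : (affineSpan ℝ (Set.range p)).direction = (U i).direction := by
    apply Submodule.eq_of_le_of_finrank_le (AffineSubspace.direction_le hT_le)
    have hmono := Submodule.finrank_mono (AffineSubspace.direction_le hT_le)
    rw [direction_affineSpan, hfrank] at hmono ⊢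
    omega
  have hSpos : 0 < S.card := by omega
  obtain ⟨j0, hj0S⟩ := Finset.card_pos.1 hSpos
  have hj0mem : x j0 ∈ affineSpan ℝ (Set.range p) :=
    subset_affineSpan ℝ _ ⟨⟨j0, hj0S⟩, rfl⟩
  have hj0U : x j0 ∈ U i := hrangesub ⟨⟨j0, hj0S⟩, rfl⟩
  have hTU : affineSpan ℝ (Set.range p) = U i :=
    AffineSubspace.ext_of_direction_eq hdirEq ⟨x j0, hj0mem, hj0U⟩
  have hUsub : (U i : Set (Euc (n' + 1))) ⊆
      ((affineSpan ℝ (Set.range x) : AffineSubspace ℝ (Euc (n' + 1))) :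
        Set (Euc (n' + 1))) := by
    rw [← hTU]
    apply SetLike.coe_subset_coe.2
    apply affineSpan_mono
    rintro _ ⟨k, rfl⟩
    exact ⟨k.1, rfl⟩
  -- endgame
  set δ0 : ℝ := ((2 * K)⁻¹) ^ (σ⁻¹ : ℝ) with hδ0
  have hδ0pos : 0 < δ0 := Real.rpow_pos_of_pos (by positivity) _
  have hval : K * δ0 ^ σ = 2⁻¹ := by
    rw [hδ0, Real.rpow_inv_rpow (by positivity) hσ.ne']
    field_simp
  have hchain : msupp (μ j0) ⊆ thickening δ0
      ((affineSpan ℝ (Set.range x) : AffineSubspace ℝ (Euc (n' + 1))) :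
        Set (Euc (n' + 1))) := by
    intro pt hpt
    apply self_subset_thickening hδ0pos
    apply hUsub
    have h1 : pt ∈ U (g j0) := hg j0 (subset_affineSpan ℝ _ hpt)
    have hgj0 : g j0 = i := (Finset.mem_filter.1 hj0S).2
    rw [hgj0] at h1
    exact h1
  have hbig : (1 : ENNReal) ≤ (μ j0) (thickening δ0
      ((affineSpan ℝ (Set.range x) : AffineSubspace ℝ (Euc (n' + 1))) :
        Set (Euc (n' + 1)))) := le_trans (hone j0) (measure_mono hchain)
  have hsmall := hthin x hxG δ0 hδ0pos j0
  rw [hval] at hsmall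
  have hcontr : (1 : ENNReal) ≤ ENNReal.ofReal 2⁻¹ := le_trans hbig hsmall
  have hlt : ENNReal.ofReal (2⁻¹ : ℝ) < 1 := by
    rw [ENNReal.ofReal_lt_one]; norm_num
  exact absurd hcontr (not_le.2 hlt)
end
end

section
/- Let V_1,…,V_m ⊆ ℝ^n be an NC collection of affine flats, and let H ⊆ ℝ^n be a hyperplane which is generic in the following sense: for every x ∈ ℝ^n ∖ H and every nonempty I ⊆ [m], writing V_I = aff(V_j : j ∈ I) and π_x for the radial projection onto H from x (π_x(y) is the unique intersection point of the line through x and y with H, defined for y outside the translate of the direction of H through x), one has dim aff(π_x(V_I ∖ {x})) = dim V_I if x ∉ V_I, and dim aff(π_x(V_I ∖ {x})) = dim V_I − 1 if x ∈ V_I. Let Ω be the set of x ∈ ℝ^n ∖ H such that the collection of flats aff(π_x(V_j ∖ {x})), j ∈ [m], is not NC inside the (n−1)-dimensional affine space H (i.e. there exist flats F_1,…,F_r ⊆ H covering their union with Σ dim F_i ≤ n−2). Then there exists a constant C = C(n,m) such that Ω is finite with |Ω| ≤ C. -/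
open MeasureTheory Metric Set

noncomputable section

/-- The image of `S \ {x}` under the radial projection from `x` onto the hyperplane `H`:
the points of `H` lying on a line through `x` and some `y ∈ S`, `y ≠ x`. -/
def radialImage {n : ℕ} (H : AffineSubspace ℝ (Euc n)) (x : Euc n) (S : Set (Euc n)) :
    Set (Euc n) :=
  {z | z ∈ H ∧ ∃ y ∈ S, y ≠ x ∧ z ∈ affineSpan ℝ ({x, y} : Set (Euc n))}

/-- A collection of flats contained in `H` is NC inside `H`: flats `F i ≤ H` covering their
union have total dimension at least `dim H`. -/
def NCInside {n m : ℕ} (H : AffineSubspace ℝ (Euc n))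
    (W : Fin m → AffineSubspace ℝ (Euc n)) : Prop :=
  ∀ (r : ℕ) (F : Fin r → AffineSubspace ℝ (Euc n)), (∀ i, F i ≤ H) →
    (⋃ j, (W j : Set (Euc n))) ⊆ (⋃ i, (F i : Set (Euc n))) →
    Module.finrank ℝ H.direction ≤ ∑ i, Module.finrank ℝ (F i).direction

lemma flat_le_of_subset_iUnion {n r : ℕ} (W : AffineSubspace ℝ (Euc n))
    (hW : (W : Set (Euc n)).Nonempty) (F : Fin r → AffineSubspace ℝ (Euc n))
    (h : (W : Set (Euc n)) ⊆ ⋃ i, (F i : Set (Euc n))) : ∃ i, W ≤ F i := by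
  by_contra hc
  push_neg at hc
  obtain ⟨p, hp⟩ := hW
  set d := Module.finrank ℝ W.direction with hd
  have e : Euc d ≃ₗ[ℝ] W.direction :=
    LinearEquiv.ofFinrankEq _ _ (by simp [finrank_euclideanSpace_fin, hd])
  set L : Euc d →ₗ[ℝ] Euc n := W.direction.subtype ∘ₗ e.toLinearMap with hL
  have φmap : ∀ (q : Euc d) (v : Euc d), L (v + q) = L v + L q := by
    intro q v; simp [map_add]
  let φ : Euc d →ᵃ[ℝ] Euc n := ⟨fun v => L v +ᵥ p, L, by
    intro q v
    simp only [vadd_eq_add, map_add]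
    abel_nf⟩
  have hφ : ∀ v, φ v = L v + p := fun v => rfl
  have hrange : Set.range φ = (W : Set (Euc n)) := by
    ext w
    constructor
    · rintro ⟨v, rfl⟩
      exact AffineSubspace.vadd_mem_of_mem_direction (show ((e v : W.direction) : Euc n) ∈ W.direction from (e v).2) hp
    · intro hw
      refine ⟨e.symm ⟨w -ᵥ p, AffineSubspace.vsub_mem_direction hw hp⟩, ?_⟩
      rw [hφ]
      have : L (e.symm ⟨w -ᵥ p, AffineSubspace.vsub_mem_direction hw hp⟩)
          = w - p := by simp [hL]
      rw [this]; abel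
  have hcover : (Set.univ : Set (Euc d)) ⊆ ⋃ i, ((F i).comap φ : Set (Euc d)) := by
    intro v _
    have : φ v ∈ (W : Set (Euc n)) := by rw [← hrange]; exact ⟨v, rfl⟩
    obtain ⟨_, ⟨i, rfl⟩, hi⟩ := h this
    exact Set.mem_iUnion.2 ⟨i, hi⟩
  have hne : ∀ i, (F i).comap φ ≠ ⊤ := by
    intro i htop
    refine hc i ?_
    intro w hw
    rw [← SetLike.mem_coe, ← hrange] at hw
    obtain ⟨v, rfl⟩ := hw
    have : v ∈ (F i).comap φ := htop ▸ AffineSubspace.mem_top ℝ _ v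
    exact this
  have h0 : volume (⋃ i, ((F i).comap φ : Set (Euc d))) = 0 :=
    measure_iUnion_null fun i => Measure.addHaar_affineSubspace _ _ (hne i)
  have : volume (Set.univ : Set (Euc d)) = 0 :=
    le_antisymm (h0 ▸ measure_mono hcover) zero_le
  exact (isOpen_univ.measure_pos volume Set.univ_nonempty).ne' this

lemma exists_radial_point {n : ℕ} {H : AffineSubspace ℝ (Euc n)} {x y : Euc n}
    (hdim : Module.finrank ℝ H.direction + 1 = n) (hH : (H : Set (Euc n)).Nonempty)
    (hx : x ∉ H) (hy : y -ᵥ x ∉ H.direction) :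
    ∃ c : ℝ, c ≠ 0 ∧ AffineMap.lineMap x y c ∈ H := by
  obtain ⟨h0, hh0⟩ := hH
  have hvne : y -ᵥ x ≠ 0 := fun h => hy (h ▸ Submodule.zero_mem _)
  have hinf : H.direction ⊓ (ℝ ∙ (y -ᵥ x)) = ⊥ := by
    rw [Submodule.eq_bot_iff]
    rintro v ⟨hv1, hv2⟩
    obtain ⟨c, rfl⟩ := Submodule.mem_span_singleton.1 hv2
    rcases eq_or_ne c 0 with rfl | hc
    · simp
    · exact absurd (by simpa [smul_smul, inv_mul_cancel₀ hc] using
        Submodule.smul_mem _ c⁻¹ hv1) hy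
  have htop : H.direction ⊔ (ℝ ∙ (y -ᵥ x)) = ⊤ := by
    apply Submodule.eq_top_of_finrank_eq
    have := Submodule.finrank_sup_add_finrank_inf_eq H.direction (ℝ ∙ (y -ᵥ x))
    rw [hinf, finrank_span_singleton hvne] at this
    simp only [finrank_bot, add_zero] at this
    rw [this, finrank_euclideanSpace_fin]
    omega
  have : h0 -ᵥ x ∈ H.direction ⊔ (ℝ ∙ (y -ᵥ x)) := htop ▸ Submodule.mem_top
  obtain ⟨u, hu, w, hw, huw⟩ := Submodule.mem_sup.1 this
  obtain ⟨c, rfl⟩ := Submodule.mem_span_singleton.1 hw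
  have hz : AffineMap.lineMap x y c ∈ H := by
    have : AffineMap.lineMap x y c = (-u) +ᵥ h0 := by
      simp only [AffineMap.lineMap_apply]
      have : c • (y -ᵥ x) = (h0 -ᵥ x) - u := by
        rw [← huw]; abel
      rw [this]
      simp [vsub_eq_sub, vadd_eq_add]
      abel
    rw [this]
    exact AffineSubspace.vadd_mem_of_mem_direction (neg_mem hu) hh0
  refine ⟨c, ?_, hz⟩
  rintro rfl
  rw [AffineMap.lineMap_apply_zero] at hz
  exact hx hz

lemma lineMap_symm {n : ℕ} {x y z : Euc n} {c : ℝ} (hc : c ≠ 0)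
    (hz : z = AffineMap.lineMap x y c) : y ∈ affineSpan ℝ ({x, z} : Set (Euc n)) := by
  have : AffineMap.lineMap x z c⁻¹ = y := by
    subst hz
    simp [AffineMap.lineMap_apply, smul_smul, inv_mul_cancel₀ hc]
  rw [← this]
  exact AffineMap.lineMap_mem_affineSpan_pair _ _ _

lemma cone_inter_hyp {n : ℕ} {H F : AffineSubspace ℝ (Euc n)} {x : Euc n}
    (hF : F ≤ H) (hFne : (F : Set (Euc n)).Nonempty) (hx : x ∉ H) :
    ∀ z, z ∈ affineSpan ℝ (insert x (F : Set (Euc n))) → z ∈ H → z ∈ F := by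
  obtain ⟨p, hp⟩ := hFne
  intro z hzC hzH
  have hpC : p ∈ affineSpan ℝ (insert x (F : Set (Euc n))) :=
    subset_affineSpan ℝ _ (Set.mem_insert_of_mem _ hp)
  have hdir := AffineSubspace.vsub_mem_direction hzC hpC
  rw [AffineSubspace.direction_affineSpan_insert hp] at hdir
  obtain ⟨a, ha, u, hu, hau⟩ := Submodule.mem_sup.1 hdir
  obtain ⟨c, rfl⟩ := Submodule.mem_span_singleton.1 ha
  rcases eq_or_ne c 0 with rfl | hc
  · have : z -ᵥ p = u := by rw [← hau]; simp
    have : z = u +ᵥ p := by rw [← this]; simp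
    rw [this]
    exact AffineSubspace.vadd_mem_of_mem_direction hu hp
  · exfalso
    apply hx
    have hzp : z -ᵥ p ∈ H.direction := AffineSubspace.vsub_mem_direction hzH (hF hp)
    have huH : u ∈ H.direction := AffineSubspace.direction_le hF hu
    have : c • (x -ᵥ p) ∈ H.direction := by
      have : c • (x -ᵥ p) = (z -ᵥ p) - u := by rw [← hau]; abel
      rw [this]; exact Submodule.sub_mem _ hzp huH
    have hxp : x -ᵥ p ∈ H.direction := by
      simpa [smul_smul, inv_mul_cancel₀ hc] using Submodule.smul_mem _ c⁻¹ this
    have : x = (x -ᵥ p) +ᵥ p := by simp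
    rw [this]
    exact AffineSubspace.vadd_mem_of_mem_direction hxp (hF hp)

lemma pair_dim {n : ℕ} {A B : AffineSubspace ℝ (Euc n)} {x x' : Euc n}
    (hxA : x ∈ A) (hxB : x ∈ B) (hx'A : x' ∈ A) (hx'B : x' ∈ B) (hne : x' ≠ x) :
    Module.finrank ℝ (A ⊔ B).direction + 1 ≤
      Module.finrank ℝ A.direction + Module.finrank ℝ B.direction := by
  have hdirsup : (A ⊔ B).direction ≤ A.direction ⊔ B.direction := by
    have h1 : A ⊔ B ≤ AffineSubspace.mk' x (A.direction ⊔ B.direction) := by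
      refine sup_le (fun a ha => ?_) (fun b hb => ?_)
      · exact AffineSubspace.mem_mk'.2
          (Submodule.mem_sup_left (AffineSubspace.vsub_mem_direction ha hxA))
      · exact AffineSubspace.mem_mk'.2
          (Submodule.mem_sup_right (AffineSubspace.vsub_mem_direction hb hxB))
    simpa [AffineSubspace.direction_mk'] using AffineSubspace.direction_le h1
  have hkey := Submodule.finrank_sup_add_finrank_inf_eq A.direction B.direction
  have hv : (ℝ ∙ (x' -ᵥ x)) ≤ A.direction ⊓ B.direction := by
    rw [Submodule.span_singleton_le_iff_mem]
    exact ⟨AffineSubspace.vsub_mem_direction hx'A hxA,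
      AffineSubspace.vsub_mem_direction hx'B hxB⟩
  have h1 : 1 ≤ Module.finrank ℝ (A.direction ⊓ B.direction : Submodule ℝ (Euc n)) := by
    have := Submodule.finrank_mono hv
    rwa [finrank_span_singleton (vsub_ne_zero.2 hne)] at this
  have hmono := Submodule.finrank_mono hdirsup
  omega

lemma join_dim {n : ℕ} {ι : Type*} [DecidableEq ι] (S : Finset ι) (hS : S.Nonempty)
    (N : ι → AffineSubspace ℝ (Euc n)) {x x' : Euc n} (hne : x' ≠ x)
    (hmem : ∀ k ∈ S, x ∈ N k ∧ x' ∈ N k) :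
    Module.finrank ℝ (S.sup N).direction + S.card ≤
      (∑ k ∈ S, Module.finrank ℝ (N k).direction) + 1 := by
  induction hS using Finset.Nonempty.cons_induction with
  | singleton a =>
    simp only [Finset.card_singleton, Finset.sum_singleton]
    have : ({a} : Finset ι).sup N ≤ N a := Finset.sup_le (by simp)
    have := Submodule.finrank_mono (AffineSubspace.direction_le this)
    omega
  | cons a S ha hS ih =>
    have hmemS : ∀ k ∈ S, x ∈ N k ∧ x' ∈ N k := fun k hk =>
      hmem k (Finset.mem_cons_of_mem hk)
    have ihS := ih hmemS
    rw [Finset.sup_cons, Finset.sum_cons, Finset.card_cons]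
    obtain ⟨b, hb⟩ := hS
    have hxS : x ∈ S.sup N := (Finset.le_sup hb : N b ≤ S.sup N) (hmemS b hb).1
    have hx'S : x' ∈ S.sup N := (Finset.le_sup hb : N b ≤ S.sup N) (hmemS b hb).2
    have := pair_dim (hmem a (Finset.mem_cons_self a S)).1 hxS
      (hmem a (Finset.mem_cons_self a S)).2 hx'S hne
    omega

/-- group span -/
def NNd {n m : ℕ} (V : Fin m → AffineSubspace ℝ (Euc n)) (g : Fin m → Option (Fin m))
    (k : Fin m) : AffineSubspace ℝ (Euc n) :=
  affineSpan ℝ (⋃ j ∈ Finset.filter (fun j => g j = some k) Finset.univ, (V j : Set (Euc n)))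

/-- parallel-part span -/
def MJd {n m : ℕ} (V : Fin m → AffineSubspace ℝ (Euc n)) (g : Fin m → Option (Fin m)) :
    AffineSubspace ℝ (Euc n) :=
  affineSpan ℝ (⋃ j ∈ Finset.filter (fun j => g j = none) Finset.univ, (V j : Set (Euc n)))

open Classical in
/-- the set of groups whose span contains x -/
def Tsetd {n m : ℕ} (V : Fin m → AffineSubspace ℝ (Euc n)) (g : Fin m → Option (Fin m))
    (x : Euc n) : Finset (Fin m) :=
  Finset.filter (fun k => x ∈ NNd V g k) Finset.univ

lemma mem_Tsetd {n m : ℕ} {V : Fin m → AffineSubspace ℝ (Euc n)} {g : Fin m → Option (Fin m)}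
    {x : Euc n} {k : Fin m} : k ∈ Tsetd V g x ↔ x ∈ NNd V g k := by
  classical
  rw [Tsetd]
  simp only [Finset.mem_filter, Finset.mem_univ, true_and]


set_option maxHeartbeats 1000000 in
lemma exists_pattern {n m : ℕ} (V : Fin m → AffineSubspace ℝ (Euc n))
    (H : AffineSubspace ℝ (Euc n)) (hHne : (H : Set (Euc n)).Nonempty)
    (hHdim : Module.finrank ℝ H.direction + 1 = n)
    (hgen : ∀ x : Euc n, x ∉ H → ∀ I : Finset (Fin m), I.Nonempty →
      (x ∉ affineSpan ℝ (⋃ j ∈ I, (V j : Set (Euc n))) →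
        Module.finrank ℝ (affineSpan ℝ (radialImage H x
            ((affineSpan ℝ (⋃ j ∈ I, (V j : Set (Euc n))) : AffineSubspace ℝ (Euc n)) :
              Set (Euc n)))).direction =
          Module.finrank ℝ (affineSpan ℝ (⋃ j ∈ I, (V j : Set (Euc n)))).direction) ∧
      (x ∈ affineSpan ℝ (⋃ j ∈ I, (V j : Set (Euc n))) →
        Module.finrank ℝ (affineSpan ℝ (radialImage H x
            ((affineSpan ℝ (⋃ j ∈ I, (V j : Set (Euc n))) : AffineSubspace ℝ (Euc n)) :
              Set (Euc n)))).direction =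
          Module.finrank ℝ (affineSpan ℝ (⋃ j ∈ I, (V j : Set (Euc n)))).direction - 1))
    (x : Euc n) (hxH : x ∉ H)
    (hbad : ¬ NCInside H fun j => affineSpan ℝ (radialImage H x (V j : Set (Euc n)))) :
    ∃ g : Fin m → Option (Fin m),
      ((∑ k, Module.finrank ℝ (NNd V g k).direction) + 2 ≤
        n + (Tsetd V g x).card) ∧
      (x ∉ MJd V g → Module.finrank ℝ (MJd V g).direction = 0) ∧
      (x ∈ MJd V g → Module.finrank ℝ (MJd V g).direction ≤ 1) := by
  classical
  simp only [NCInside, not_forall] at hbad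
  obtain ⟨r, F, hFH, hcov, hsum⟩ := hbad
  rw [not_le] at hsum
  have hsum2 : (∑ i, Module.finrank ℝ (F i).direction) + 2 ≤ n := by omega
  set P : AffineSubspace ℝ (Euc n) := AffineSubspace.mk' x H.direction with hP
  have hPH : ∀ w, w ∈ P → w ∈ H → False := by
    intro w hwP hwH
    apply hxH
    have hv : w -ᵥ x ∈ H.direction := AffineSubspace.mem_mk'.1 hwP
    have : x = (-(w -ᵥ x)) +ᵥ w := by simp
    rw [this]
    exact AffineSubspace.vadd_mem_of_mem_direction (neg_mem hv) hwH
  -- radial images of non-parallel flats are nonempty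
  have radial_wit : ∀ (S : Set (Euc n)) (y : Euc n), y ∈ S → y ∉ P →
      ∃ z ∈ radialImage H x S, y ∈ affineSpan ℝ ({x, z} : Set (Euc n)) := by
    intro S y hyS hyP
    have hyx : y ≠ x := fun h => hyP (h ▸ AffineSubspace.self_mem_mk' x _)
    have hyd : y -ᵥ x ∉ H.direction := fun h => hyP (AffineSubspace.mem_mk'.2 h)
    obtain ⟨c, hc, hz⟩ := exists_radial_point hHdim hHne hxH hyd
    refine ⟨AffineMap.lineMap x y c, ⟨hz, y, hyS, hyx,
      AffineMap.lineMap_mem_affineSpan_pair c x y⟩, lineMap_symm hc rfl⟩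
  -- claim 1
  have claim1 : ∀ j : Fin m, ¬ (V j ≤ P) → ∃ i : Fin r,
      affineSpan ℝ (radialImage H x (V j : Set (Euc n))) ≤ F i ∧
      V j ≤ affineSpan ℝ (insert x (F i : Set (Euc n))) ∧
      ((F i : Set (Euc n))).Nonempty := by
    intro j hj
    rw [AffineSubspace.le_def] at hj
    obtain ⟨y, hyV, hyP⟩ := Set.not_subset.1 hj
    obtain ⟨z, hzr, -⟩ := radial_wit (V j : Set (Euc n)) y hyV hyP
    have hWne : ((affineSpan ℝ (radialImage H x (V j : Set (Euc n)))) :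
        Set (Euc n)).Nonempty := ⟨z, subset_affineSpan ℝ _ hzr⟩
    have hWsub : ((affineSpan ℝ (radialImage H x (V j : Set (Euc n)))) : Set (Euc n)) ⊆
        ⋃ i, (F i : Set (Euc n)) := by
      refine Set.Subset.trans ?_ hcov
      exact Set.subset_iUnion
        (fun j => ((affineSpan ℝ (radialImage H x (V j : Set (Euc n)))) : Set (Euc n))) j
    obtain ⟨i, hi⟩ := flat_le_of_subset_iUnion _ hWne F hWsub
    have hFne : ((F i : Set (Euc n))).Nonempty := ⟨z, hi (subset_affineSpan ℝ _ hzr)⟩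
    refine ⟨i, hi, ?_, hFne⟩
    -- V j ⊆ cone ∪ P
    have hsub2 : (V j : Set (Euc n)) ⊆
        ((affineSpan ℝ (insert x (F i : Set (Euc n))) : AffineSubspace ℝ (Euc n)) :
          Set (Euc n)) ∪ (P : Set (Euc n)) := by
      intro y' hy'
      by_cases hy'P : y' ∈ P
      · exact Or.inr hy'P
      · left
        obtain ⟨z', hz'r, hy'sp⟩ := radial_wit (V j : Set (Euc n)) y' hy' hy'P
        have hz'F : z' ∈ F i := hi (subset_affineSpan ℝ _ hz'r)
        have : affineSpan ℝ ({x, z'} : Set (Euc n)) ≤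
            affineSpan ℝ (insert x (F i : Set (Euc n))) := by
          rw [affineSpan_le]
          rintro w (rfl | hw)
          · exact subset_affineSpan ℝ _ (Set.mem_insert _ _)
          · simp only [Set.mem_singleton_iff] at hw
            subst hw
            exact subset_affineSpan ℝ _ (Set.mem_insert_of_mem _ hz'F)
        exact this hy'sp
    have : ∃ i' : Fin 2, V j ≤
        (![affineSpan ℝ (insert x (F i : Set (Euc n))), P] i') := by
      apply flat_le_of_subset_iUnion _ ⟨y, hyV⟩
      intro w hw
      rcases hsub2 hw with h | h
      · exact Set.mem_iUnion.2 ⟨0, h⟩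
      · exact Set.mem_iUnion.2 ⟨1, h⟩
    obtain ⟨i', hi'⟩ := this
    fin_cases i'
    · exact hi'
    · exact absurd hi' hj
  -- choice function φ
  let φ : Fin m → Option (Fin r) := fun j =>
    if h : V j ≤ P then none else some (claim1 j h).choose
  have φnone : ∀ j, φ j = none ↔ V j ≤ P := by
    intro j
    by_cases h : V j ≤ P <;> simp [φ, h]
  have φsome : ∀ j i, φ j = some i →
      affineSpan ℝ (radialImage H x (V j : Set (Euc n))) ≤ F i ∧
      V j ≤ affineSpan ℝ (insert x (F i : Set (Euc n))) ∧ ((F i : Set (Euc n))).Nonempty := by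
    intro j i hji
    by_cases h : V j ≤ P
    · simp [φ, h] at hji
    · simp only [φ, dif_neg h, Option.some.injEq] at hji
      exact hji ▸ (claim1 j h).choose_spec
  -- leader function g
  let Sj : Fin m → Finset (Fin m) := fun j => Finset.filter (fun j' => φ j' = φ j) Finset.univ
  have hSjmem : ∀ j, j ∈ Sj j := by simp [Sj]
  let g : Fin m → Option (Fin m) := fun j =>
    if φ j = none then none else some ((Sj j).min' ⟨j, hSjmem j⟩)
  have gnone : ∀ j, g j = none ↔ φ j = none := by
    intro j
    by_cases h : φ j = none <;> simp [g, h]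
  have gsome : ∀ j k, g j = some k → φ k = φ j ∧ φ j ≠ none := by
    intro j k hjk
    by_cases h : φ j = none
    · simp [g, h] at hjk
    · refine ⟨?_, h⟩
      simp only [g, if_neg h, Option.some.injEq] at hjk
      have : k ∈ Sj j := hjk ▸ (Sj j).min'_mem ⟨j, hSjmem j⟩
      simpa [Sj] using this
  have gleader : ∀ j k, g j = some k → g k = some k := by
    intro j k hjk
    obtain ⟨hφk, hφj⟩ := gsome j k hjk
    have hφkne : φ k ≠ none := hφk ▸ hφj
    have hSjeq : Sj k = Sj j := by
      apply Finset.ext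
      intro a
      simp only [Sj, Finset.mem_filter, Finset.mem_univ, true_and, hφk]
    simp only [g, if_neg hφkne, if_neg hφj, Option.some.injEq] at hjk ⊢
    have hmin : (Sj k).min' ⟨k, hSjmem k⟩ = (Sj j).min' ⟨j, hSjmem j⟩ := by
      congr 1
    exact hmin.trans hjk
  -- fibers
  set fib : Fin m → Finset (Fin m) :=
    fun k => Finset.filter (fun j => g j = some k) Finset.univ with hfib
  have hNNeq : ∀ k, NNd V g k = affineSpan ℝ (⋃ j ∈ fib k, (V j : Set (Euc n))) :=
    fun k => rfl
  have hVleNN : ∀ k, ∀ j ∈ fib k, V j ≤ NNd V g k := by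
    intro k j hj
    rw [hNNeq, AffineSubspace.le_def]
    refine Set.Subset.trans ?_ (subset_affineSpan ℝ _)
    intro w hw
    exact Set.mem_biUnion hj hw
  -- key dimension estimate per nonempty fiber
  have key : ∀ k : Fin m, (fib k).Nonempty →
      ∃ i : Fin r, φ k = some i ∧
        Module.finrank ℝ (NNd V g k).direction ≤
          Module.finrank ℝ (F i).direction + (if x ∈ NNd V g k then 1 else 0) := by
    intro k hk
    obtain ⟨j0, hj0⟩ := hk
    simp only [hfib, Finset.mem_filter, Finset.mem_univ, true_and] at hj0
    obtain ⟨hφkj0, hφj0⟩ := gsome j0 k hj0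
    obtain ⟨i, hφki⟩ : ∃ i, φ k = some i := by
      cases hφk : φ k
      · exact absurd (hφkj0 ▸ hφk) hφj0
      · exact ⟨_, rfl⟩
    have hfibφ : ∀ j ∈ fib k, φ j = some i := by
      intro j hj
      simp only [hfib, Finset.mem_filter, Finset.mem_univ, true_and] at hj
      obtain ⟨hφkj, -⟩ := gsome j k hj
      rw [← hφkj, hφki]
    have hFine : ((F i : Set (Euc n))).Nonempty := (φsome j0 i (hfibφ j0 (by
      simp only [hfib, Finset.mem_filter, Finset.mem_univ, true_and]; exact hj0))).2.2
    have hNNle : NNd V g k ≤ affineSpan ℝ (insert x (F i : Set (Euc n))) := by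
      rw [hNNeq, affineSpan_le]
      intro w hw
      simp only [Set.mem_iUnion] at hw
      obtain ⟨j, hj, hw⟩ := hw
      exact (φsome j i (hfibφ j hj)).2.1 hw
    have hrad : radialImage H x ((NNd V g k : AffineSubspace ℝ (Euc n)) : Set (Euc n)) ⊆
        (F i : Set (Euc n)) := by
      rintro z ⟨hzH, y, hyNN, hyx, hzsp⟩
      have hyC : y ∈ affineSpan ℝ (insert x (F i : Set (Euc n))) := hNNle hyNN
      have hxC : x ∈ affineSpan ℝ (insert x (F i : Set (Euc n))) :=
        subset_affineSpan ℝ _ (Set.mem_insert _ _)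
      have hzC : z ∈ affineSpan ℝ (insert x (F i : Set (Euc n))) := by
        have : affineSpan ℝ ({x, y} : Set (Euc n)) ≤
            affineSpan ℝ (insert x (F i : Set (Euc n))) := by
          rw [affineSpan_le]
          rintro w (rfl | hw)
          · exact hxC
          · simp only [Set.mem_singleton_iff] at hw
            exact hw ▸ hyC
        exact this hzsp
      exact cone_inter_hyp (hFH i) hFine hxH z hzC hzH
    have hWle : affineSpan ℝ (radialImage H x
        ((NNd V g k : AffineSubspace ℝ (Euc n)) : Set (Euc n))) ≤ F i := by
      rw [affineSpan_le]
      exact Set.Subset.trans hrad (by rfl)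
    have hdimW := Submodule.finrank_mono (AffineSubspace.direction_le hWle)
    have hfibne : (fib k).Nonempty := ⟨j0, by
      simp only [hfib, Finset.mem_filter, Finset.mem_univ, true_and]; exact hj0⟩
    refine ⟨i, hφki, ?_⟩
    by_cases hxNN : x ∈ NNd V g k
    · have hg := (hgen x hxH (fib k) hfibne).2 hxNN
      rw [if_pos hxNN]
      rw [← hNNeq] at hg
      omega
    · have hg := (hgen x hxH (fib k) hfibne).1 hxNN
      rw [if_neg hxNN]
      rw [← hNNeq] at hg
      omega
  -- the sum estimate
  set T := Tsetd V g x with hT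
  have hTmem : ∀ k, k ∈ T ↔ x ∈ NNd V g k := fun k => mem_Tsetd
  set Ldr := Finset.filter (fun k => (fib k).Nonempty) Finset.univ with hLdr
  have hbotk : ∀ k : Fin m, ¬ (fib k).Nonempty → NNd V g k = ⊥ := by
    intro k hk
    rw [Finset.not_nonempty_iff_eq_empty] at hk
    rw [hNNeq, hk]
    simp [AffineSubspace.span_empty]
  have hTLdr : T ⊆ Ldr := by
    intro k hk
    have hx1 : x ∈ NNd V g k := (hTmem k).1 hk
    simp only [hLdr, Finset.mem_filter, Finset.mem_univ, true_and]
    by_contra h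
    rw [hbotk k h] at hx1
    have : x ∈ ((⊥ : AffineSubspace ℝ (Euc n)) : Set (Euc n)) := hx1
    rw [AffineSubspace.bot_coe] at this
    exact this
  have hsumNN : (∑ k, Module.finrank ℝ (NNd V g k).direction) ≤
      (∑ i, Module.finrank ℝ (F i).direction) + T.card := by
    have htotal : ∑ k ∈ Ldr, Module.finrank ℝ (NNd V g k).direction
        = ∑ k, Module.finrank ℝ (NNd V g k).direction := by
      refine Finset.sum_subset (Finset.subset_univ Ldr) ?_
      intro k _ hk
      have hkk : ¬ (fib k).Nonempty := by
        simpa [hLdr, Finset.mem_filter] using hk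
      rw [hbotk k hkk, AffineSubspace.direction_bot, finrank_bot]
    have hG : ∀ k ∈ Ldr, Module.finrank ℝ (NNd V g k).direction ≤
        ((φ k).elim 0 (fun i => Module.finrank ℝ (F i).direction)) +
          (if x ∈ NNd V g k then 1 else 0) := by
      intro k hk
      simp only [hLdr, Finset.mem_filter, Finset.mem_univ, true_and] at hk
      obtain ⟨i, hφki, hke⟩ := key k hk
      rw [hφki]
      exact hke
    have h1 : ∑ k ∈ Ldr, Module.finrank ℝ (NNd V g k).direction ≤
        ∑ k ∈ Ldr, (((φ k).elim 0 (fun i => Module.finrank ℝ (F i).direction)) +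
          (if x ∈ NNd V g k then 1 else 0)) := Finset.sum_le_sum hG
    rw [Finset.sum_add_distrib] at h1
    have hite : ∑ k ∈ Ldr, (if x ∈ NNd V g k then 1 else 0) = T.card := by
      rw [Finset.sum_boole]
      simp only [Nat.cast_id]
      congr 1
      apply Finset.ext
      intro k
      simp only [Finset.mem_filter]
      constructor
      · rintro ⟨-, hk⟩
        exact (hTmem k).2 hk
      · intro hk
        exact ⟨hTLdr hk, (hTmem k).1 hk⟩
    have hgleads : ∀ k ∈ Ldr, g k = some k := by
      intro k hk
      simp only [hLdr, Finset.mem_filter, Finset.mem_univ, true_and] at hk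
      obtain ⟨j, hj⟩ := hk
      simp only [hfib, Finset.mem_filter, Finset.mem_univ, true_and] at hj
      exact gleader j k hj
    have hinj : ∀ k ∈ Ldr, ∀ k' ∈ Ldr, φ k = φ k' → k = k' := by
      intro k hk k' hk' hφeq
      have hgk := hgleads k hk
      have hgk' := hgleads k' hk'
      have hφkne : φ k ≠ none := by
        intro h
        rw [(gnone k).2 h] at hgk
        exact Option.some_ne_none _ hgk.symm
      have hφk'ne : φ k' ≠ none := fun h => by
        rw [(gnone k').2 h] at hgk'
        exact Option.some_ne_none _ hgk'.symm
      have hSjeq : Sj k = Sj k' := by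
        apply Finset.ext
        intro a
        simp only [Sj, Finset.mem_filter, Finset.mem_univ, true_and, hφeq]
      have hmin : (Sj k).min' ⟨k, hSjmem k⟩ = (Sj k').min' ⟨k', hSjmem k'⟩ := by
        congr 1
      simp only [g, if_neg hφkne, if_neg hφk'ne, Option.some.injEq] at hgk hgk'
      rw [← hgk, ← hgk']
      exact hmin
    have himg : ∑ k ∈ Ldr, (φ k).elim 0 (fun i => Module.finrank ℝ (F i).direction) ≤
        ∑ i, Module.finrank ℝ (F i).direction := by
      have himgeq : ∑ o ∈ Ldr.image φ, o.elim 0 (fun i => Module.finrank ℝ (F i).direction)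
          = ∑ k ∈ Ldr, (φ k).elim 0 (fun i => Module.finrank ℝ (F i).direction) :=
        Finset.sum_image hinj
      rw [← himgeq]
      calc ∑ o ∈ Ldr.image φ, o.elim 0 (fun i => Module.finrank ℝ (F i).direction)
          ≤ ∑ o : Option (Fin r), o.elim 0 (fun i => Module.finrank ℝ (F i).direction) :=
            Finset.sum_le_sum_of_subset (Finset.subset_univ _)
        _ = ∑ i, Module.finrank ℝ (F i).direction := by
            rw [univ_option, Finset.sum_insertNone]
            simp
    omega
  -- E4 / E5
  set Jset := Finset.filter (fun j => g j = none) Finset.univ with hJset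
  have hMJeq : MJd V g = affineSpan ℝ (⋃ j ∈ Jset, (V j : Set (Euc n))) := rfl
  have hMJle : MJd V g ≤ P := by
    rw [hMJeq, affineSpan_le]
    intro w hw
    simp only [Set.mem_iUnion] at hw
    obtain ⟨j, hj, hw⟩ := hw
    simp only [hJset, Finset.mem_filter, Finset.mem_univ, true_and] at hj
    exact (φnone j).1 ((gnone j).1 hj) hw
  have hradMJ : radialImage H x ((affineSpan ℝ (⋃ j ∈ Jset, (V j : Set (Euc n))) :
      AffineSubspace ℝ (Euc n)) : Set (Euc n)) = ∅ := by
    rw [Set.eq_empty_iff_forall_notMem]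
    rintro z ⟨hzH, y, hyM, hyx, hzsp⟩
    have hxP : x ∈ P := AffineSubspace.self_mem_mk' x _
    have hyP : y ∈ P := hMJle hyM
    have hzP : z ∈ P := by
      have hle : affineSpan ℝ ({x, y} : Set (Euc n)) ≤ P := by
        rw [affineSpan_le]
        rintro w (rfl | hw)
        · exact hxP
        · simp only [Set.mem_singleton_iff] at hw
          exact hw ▸ hyP
      exact hle hzsp
    exact hPH z hzP hzH
  have hE45 : (x ∉ MJd V g → Module.finrank ℝ (MJd V g).direction = 0) ∧
      (x ∈ MJd V g → Module.finrank ℝ (MJd V g).direction ≤ 1) := by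
    by_cases hJ : Jset.Nonempty
    · have hgenJ := hgen x hxH Jset hJ
      constructor
      · intro hxM
        have h0 := hgenJ.1 hxM
        rw [hradMJ, AffineSubspace.span_empty, AffineSubspace.direction_bot,
          finrank_bot] at h0
        rw [hMJeq]
        omega
      · intro hxM
        have h0 := hgenJ.2 hxM
        rw [hradMJ, AffineSubspace.span_empty, AffineSubspace.direction_bot,
          finrank_bot] at h0
        rw [hMJeq]
        omega
    · have hbotMJ : MJd V g = ⊥ := by
        rw [Finset.not_nonempty_iff_eq_empty] at hJ
        rw [hMJeq, hJ]
        simp [AffineSubspace.span_empty]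
      constructor
      · intro _
        rw [hbotMJ, AffineSubspace.direction_bot, finrank_bot]
      · intro hxM
        rw [hbotMJ] at hxM
        have : x ∈ ((⊥ : AffineSubspace ℝ (Euc n)) : Set (Euc n)) := hxM
        rw [AffineSubspace.bot_coe] at this
        exact this.elim
  exact ⟨g, by rw [← hT]; omega, hE45.1, hE45.2⟩

lemma le_NNd {n m : ℕ} {V : Fin m → AffineSubspace ℝ (Euc n)} {g : Fin m → Option (Fin m)}
    {j k : Fin m} (hgj : g j = some k) : V j ≤ NNd V g k := by
  classical
  rw [NNd, AffineSubspace.le_def]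
  refine Set.Subset.trans ?_ (subset_affineSpan ℝ _)
  intro w hw
  have hjmem : j ∈ Finset.filter (fun j' => g j' = some k) Finset.univ := by
    simp [hgj]
  exact Set.mem_biUnion hjmem hw

lemma le_MJd {n m : ℕ} {V : Fin m → AffineSubspace ℝ (Euc n)} {g : Fin m → Option (Fin m)}
    {j : Fin m} (hgj : g j = none) : V j ≤ MJd V g := by
  classical
  rw [MJd, AffineSubspace.le_def]
  refine Set.Subset.trans ?_ (subset_affineSpan ℝ _)
  intro w hw
  have hjmem : j ∈ Finset.filter (fun j' => g j' = none) Finset.univ := by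
    simp [hgj]
  exact Set.mem_biUnion hjmem hw

lemma dim_congr {n : ℕ} {A B : AffineSubspace ℝ (Euc n)} (h : A = B) :
    Module.finrank ℝ A.direction = Module.finrank ℝ B.direction := by rw [h]

lemma sum_snoc_dim {n m : ℕ} (N : Fin m → AffineSubspace ℝ (Euc n))
    (Z : AffineSubspace ℝ (Euc n)) :
    ∑ i : Fin (m+1), Module.finrank ℝ ((Fin.snoc N Z : Fin (m+1) →
        AffineSubspace ℝ (Euc n)) i).direction
      = (∑ k, Module.finrank ℝ (N k).direction) + Module.finrank ℝ Z.direction := by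
  rw [Fin.sum_univ_castSucc]
  congr 1
  · exact Finset.sum_congr rfl fun k _ => dim_congr (Fin.snoc_castSucc ..)
  · exact dim_congr (Fin.snoc_last ..)

lemma cover_bound {n m : ℕ} (V : Fin m → AffineSubspace ℝ (Euc n)) (hNC : NCFlats V)
    (g : Fin m → Option (Fin m)) :
    n ≤ (∑ k, Module.finrank ℝ (NNd V g k).direction) +
      Module.finrank ℝ (MJd V g).direction := by
  classical
  set F1 : Fin (m+1) → AffineSubspace ℝ (Euc n) := Fin.snoc (NNd V g) (MJd V g) with hF1
  have hcov : (⋃ j, (V j : Set (Euc n))) ⊆ ⋃ i, (F1 i : Set (Euc n)) := by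
    intro y hy
    simp only [Set.mem_iUnion] at hy ⊢
    obtain ⟨j, hj⟩ := hy
    cases hgj : g j with
    | none =>
      refine ⟨Fin.last m, ?_⟩
      have h1 : F1 (Fin.last m) = MJd V g := by simp [hF1]
      rw [h1]
      exact le_MJd hgj hj
    | some k =>
      refine ⟨Fin.castSucc k, ?_⟩
      have h1 : F1 (Fin.castSucc k) = NNd V g k := by simp [hF1]
      rw [h1]
      exact le_NNd hgj hj
  have h := hNC (m+1) F1 hcov
  rw [hF1, sum_snoc_dim] at h
  exact h

set_option maxHeartbeats 1000000 in
lemma pattern_unique {n m : ℕ} (V : Fin m → AffineSubspace ℝ (Euc n)) (hNC : NCFlats V)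
    (g : Fin m → Option (Fin m)) (x x' : Euc n)
    (hE3 : (∑ k, Module.finrank ℝ (NNd V g k).direction) + 2 ≤ n + (Tsetd V g x).card)
    (hE4 : x ∉ MJd V g → Module.finrank ℝ (MJd V g).direction = 0)
    (hE5 : x ∈ MJd V g → Module.finrank ℝ (MJd V g).direction ≤ 1)
    (hTeq : Tsetd V g x = Tsetd V g x')
    (hfeq : (x ∈ MJd V g) ↔ (x' ∈ MJd V g)) : x = x' := by
  classical
  by_contra hne
  have hne' : x' ≠ x := fun h => hne h.symm
  have hC2 := cover_bound V hNC g
  set T := Tsetd V g x with hT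
  by_cases hT0 : T = ∅
  · rw [hT0, Finset.card_empty] at hE3
    by_cases hf : x ∈ MJd V g
    · have := hE5 hf
      omega
    · have := hE4 hf
      omega
  · have hTne : T.Nonempty := Finset.nonempty_iff_ne_empty.2 hT0
    have hmem : ∀ k ∈ T, x ∈ NNd V g k ∧ x' ∈ NNd V g k := by
      intro k hk
      refine ⟨mem_Tsetd.1 hk, mem_Tsetd.1 ?_⟩
      rw [← hTeq]
      exact hk
    set D := T.sup (NNd V g) with hD
    have hjoin := join_dim T hTne (NNd V g) hne' hmem
    rw [← hD] at hjoin
    obtain ⟨k0, hk0⟩ := hTne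
    have hxD : x ∈ D := (Finset.le_sup hk0 : NNd V g k0 ≤ D) (hmem k0 hk0).1
    have hx'D : x' ∈ D := (Finset.le_sup hk0 : NNd V g k0 ≤ D) (hmem k0 hk0).2
    set N' : Fin m → AffineSubspace ℝ (Euc n) := fun k => if k ∈ T then ⊥ else NNd V g k
      with hN'
    have hN'T : ∀ k, k ∈ T → N' k = ⊥ := fun k hk => by
      show (if k ∈ T then (⊥ : AffineSubspace ℝ (Euc n)) else NNd V g k) = ⊥
      rw [if_pos hk]
    have hN'nT : ∀ k, k ∉ T → N' k = NNd V g k := fun k hk => by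
      show (if k ∈ T then (⊥ : AffineSubspace ℝ (Euc n)) else NNd V g k) = NNd V g k
      rw [if_neg hk]
    have hsumsplit : ∑ k, Module.finrank ℝ (NNd V g k).direction =
        (∑ k ∈ T, Module.finrank ℝ (NNd V g k).direction) +
        (∑ k, Module.finrank ℝ (N' k).direction) := by
      have h1 : ∑ k, Module.finrank ℝ (N' k).direction =
          ∑ k ∈ Finset.filter (fun k => k ∉ T) Finset.univ,
            Module.finrank ℝ (NNd V g k).direction := by
        rw [← Finset.sum_filter_add_sum_filter_not Finset.univ (fun k => k ∈ T)
          (fun k => Module.finrank ℝ (N' k).direction)]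
        have hz : ∑ k ∈ Finset.filter (fun k => k ∈ T) Finset.univ,
            Module.finrank ℝ (N' k).direction = 0 := by
          refine Finset.sum_eq_zero ?_
          intro k hk
          simp only [Finset.mem_filter, Finset.mem_univ, true_and] at hk
          rw [hN'T k hk, AffineSubspace.direction_bot, finrank_bot]
        rw [hz, zero_add]
        refine Finset.sum_congr rfl ?_
        intro k hk
        simp only [Finset.mem_filter, Finset.mem_univ, true_and] at hk
        rw [hN'nT k hk]
      rw [h1, ← Finset.sum_filter_add_sum_filter_not Finset.univ (fun k => k ∈ T)
        (fun k => Module.finrank ℝ (NNd V g k).direction)]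
      congr 1
      congr 1
      apply Finset.ext
      intro k
      simp [Finset.mem_filter]
    by_cases hf : x ∈ MJd V g
    · -- f = true : cover by N' (k ∉ T) and D ⊔ MJ
      have hx'M : x' ∈ MJd V g := hfeq.1 hf
      set F2 : Fin (m+1) → AffineSubspace ℝ (Euc n) := Fin.snoc N' (D ⊔ MJd V g) with hF2
      have hcov2 : (⋃ j, (V j : Set (Euc n))) ⊆ ⋃ i, (F2 i : Set (Euc n)) := by
        intro y hy
        simp only [Set.mem_iUnion] at hy ⊢
        obtain ⟨j, hj⟩ := hy
        cases hgj : g j with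
        | none =>
          refine ⟨Fin.last m, ?_⟩
          have h1 : F2 (Fin.last m) = D ⊔ MJd V g := by simp [hF2]
          rw [h1]
          exact (le_trans (le_MJd hgj) le_sup_right) hj
        | some k =>
          by_cases hkT : k ∈ T
          · refine ⟨Fin.last m, ?_⟩
            have h1 : F2 (Fin.last m) = D ⊔ MJd V g := by simp [hF2]
            rw [h1]
            exact (le_trans (le_trans (le_NNd hgj) (Finset.le_sup hkT)) le_sup_left) hj
          · refine ⟨Fin.castSucc k, ?_⟩
            have h1 : F2 (Fin.castSucc k) = NNd V g k := by
              rw [hF2]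
              simp only [Fin.snoc_castSucc]
              exact hN'nT k hkT
            rw [h1]
            exact le_NNd hgj hj
      have h := hNC (m+1) F2 hcov2
      rw [hF2, sum_snoc_dim] at h
      have hpair := pair_dim hxD hf hx'D hx'M hne'
      have hE5' := hE5 hf
      omega
    · -- f = false : cover by N' (k ∉ T), D and MJ
      have hx'M : x' ∉ MJd V g := fun h => hf (hfeq.2 h)
      have hE4' := hE4 hf
      set F3 : Fin (m+2) → AffineSubspace ℝ (Euc n) :=
        Fin.snoc (Fin.snoc N' D) (MJd V g) with hF3
      have hcov3 : (⋃ j, (V j : Set (Euc n))) ⊆ ⋃ i, (F3 i : Set (Euc n)) := by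
        intro y hy
        simp only [Set.mem_iUnion] at hy ⊢
        obtain ⟨j, hj⟩ := hy
        cases hgj : g j with
        | none =>
          refine ⟨Fin.last (m+1), ?_⟩
          have h1 : F3 (Fin.last (m+1)) = MJd V g := by simp [hF3]
          rw [h1]
          exact le_MJd hgj hj
        | some k =>
          by_cases hkT : k ∈ T
          · refine ⟨Fin.castSucc (Fin.last m), ?_⟩
            have h1 : F3 (Fin.castSucc (Fin.last m)) = D := by simp [hF3]
            rw [h1]
            exact (le_trans (le_NNd hgj) (Finset.le_sup hkT)) hj
          · refine ⟨Fin.castSucc (Fin.castSucc k), ?_⟩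
            have h1 : F3 (Fin.castSucc (Fin.castSucc k)) = NNd V g k := by
              rw [hF3]
              simp only [Fin.snoc_castSucc]
              exact hN'nT k hkT
            rw [h1]
            exact le_NNd hgj hj
      have h := hNC (m+2) F3 hcov3
      rw [hF3, sum_snoc_dim, sum_snoc_dim] at h
      omega


/-- Radial projections of NC flats. There is a constant `C = C(n,m)` such
that for every NC collection of flats `V 1, …, V m` in `ℝⁿ` and every generic hyperplane `H`,
the set `Ω` of centers `x ∉ H` for which the radially projected flats fail to be NC inside `H`
is finite of cardinality at most `C`. -/
theorem stmt_13 (n m : ℕ) :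
    ∃ C : ℕ, ∀ V : Fin m → AffineSubspace ℝ (Euc n), NCFlats V →
      ∀ H : AffineSubspace ℝ (Euc n), (H : Set (Euc n)).Nonempty →
        Module.finrank ℝ H.direction + 1 = n →
        (∀ x : Euc n, x ∉ H → ∀ I : Finset (Fin m), I.Nonempty →
          (x ∉ affineSpan ℝ (⋃ j ∈ I, (V j : Set (Euc n))) →
            Module.finrank ℝ (affineSpan ℝ (radialImage H x
                ((affineSpan ℝ (⋃ j ∈ I, (V j : Set (Euc n))) : AffineSubspace ℝ (Euc n)) :
                  Set (Euc n)))).direction =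
              Module.finrank ℝ (affineSpan ℝ (⋃ j ∈ I, (V j : Set (Euc n)))).direction) ∧
          (x ∈ affineSpan ℝ (⋃ j ∈ I, (V j : Set (Euc n))) →
            Module.finrank ℝ (affineSpan ℝ (radialImage H x
                ((affineSpan ℝ (⋃ j ∈ I, (V j : Set (Euc n))) : AffineSubspace ℝ (Euc n)) :
                  Set (Euc n)))).direction =
              Module.finrank ℝ (affineSpan ℝ (⋃ j ∈ I, (V j : Set (Euc n)))).direction - 1)) →
        {x : Euc n | x ∉ H ∧
          ¬ NCInside H fun j => affineSpan ℝ (radialImage H x (V j : Set (Euc n)))}.Finite ∧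
        {x : Euc n | x ∉ H ∧
          ¬ NCInside H fun j => affineSpan ℝ (radialImage H x (V j : Set (Euc n)))}.ncard ≤ C := by
  classical
  refine ⟨Fintype.card ((Fin m → Option (Fin m)) × Finset (Fin m) × Bool), ?_⟩
  intro V hNC H hHne hHdim hgen
  set Ω : Set (Euc n) := {x : Euc n | x ∉ H ∧
    ¬ NCInside H fun j => affineSpan ℝ (radialImage H x (V j : Set (Euc n)))} with hΩ
  have hex : ∀ x : Euc n, x ∈ Ω → ∃ g : Fin m → Option (Fin m),
      ((∑ k, Module.finrank ℝ (NNd V g k).direction) + 2 ≤ n + (Tsetd V g x).card) ∧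
      (x ∉ MJd V g → Module.finrank ℝ (MJd V g).direction = 0) ∧
      (x ∈ MJd V g → Module.finrank ℝ (MJd V g).direction ≤ 1) := by
    rintro x ⟨hxH, hbad⟩
    exact exists_pattern V H hHne hHdim hgen x hxH hbad
  choose! gf hgf using hex
  set pat : Euc n → ((Fin m → Option (Fin m)) × Finset (Fin m) × Bool) :=
    fun x => (gf x, Tsetd V (gf x) x, if x ∈ MJd V (gf x) then true else false) with hpat
  have hinj : Set.InjOn pat Ω := by
    intro x hx x' hx' hpe
    simp only [hpat, Prod.mk.injEq] at hpe
    obtain ⟨hg, hTe, hbe⟩ := hpe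
    obtain ⟨hE3, hE4, hE5⟩ := hgf x hx
    rw [← hg] at hTe hbe
    have hfeq : (x ∈ MJd V (gf x)) ↔ (x' ∈ MJd V (gf x)) := by
      by_cases h1 : x ∈ MJd V (gf x) <;> by_cases h2 : x' ∈ MJd V (gf x) <;>
        simp [h1, h2] at hbe ⊢
    exact pattern_unique V hNC (gf x) x x' hE3 hE4 hE5 hTe hfeq
  have hfin : Ω.Finite := Set.Finite.of_finite_image (Set.toFinite _) hinj
  refine ⟨hfin, ?_⟩
  calc Ω.ncard = (pat '' Ω).ncard := (Set.ncard_image_of_injOn hinj).symm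
    _ ≤ (Set.univ : Set ((Fin m → Option (Fin m)) × Finset (Fin m) × Bool)).ncard :=
        Set.ncard_le_ncard (Set.subset_univ _) (Set.toFinite _)
    _ = Fintype.card ((Fin m → Option (Fin m)) × Finset (Fin m) × Bool) := by
        rw [Set.ncard_univ, Nat.card_eq_fintype_card]
end
end

section
/- Let μ_0, μ_1 be probability measures on ℝ^n with supports X_0, X_1 contained in the closed unit ball, let G ⊆ X_0 × X_1 be a Borel set such that for every (x_0,x_1) ∈ G, every δ > 0 and each j ∈ {0,1}, μ_j of the δ-neighborhood of the line through x_0 and x_1 is at most K·δ^σ. Let H ⊆ ℝ^n be a hyperplane with dist(H, X_0 ∪ X_1) ≥ 1/C' for some C' > 0, and for x ∈ X_0 let π_x be the map (defined off the translate of the direction of H through x) sending y to the unique intersection point of the line through x and y with H. Then there exists A = A(n,C') such that for every x ∈ X_0, the pushforward under π_x of μ_1 restricted to the section G|_x = {x_1 : (x,x_1) ∈ G} is (A^σ·K, σ)-Frostman on H: it gives every ball B(y,δ) with y ∈ H measure at most A^σ·K·δ^σ. -/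
open MeasureTheory Metric Set

noncomputable section

lemma aux_inter {n : ℕ} (H : AffineSubspace ℝ (Euc n)) (hHne : (H : Set (Euc n)).Nonempty)
    (hHdim : Module.finrank ℝ H.direction + 1 = n) (x v : Euc n)
    (hv : v -ᵥ x ∉ H.direction) :
    ∃ c : ℝ, (x + c • (v - x)) ∈ H ∧
      (x + c • (v - x)) ∈ affineSpan ℝ ({x, v} : Set (Euc n)) := by
  obtain ⟨p, hp⟩ := hHne
  have hwD : v - x ∉ H.direction := by simpa [vsub_eq_sub] using hv
  have htop : H.direction ⊔ Submodule.span ℝ {v - x} = ⊤ := by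
    have hlt : H.direction < H.direction ⊔ Submodule.span ℝ {v - x} :=
      lt_of_le_not_ge le_sup_left (fun h => hwD
        (h (Submodule.mem_sup_right (Submodule.mem_span_singleton_self (v - x)))))
    have h1 : Module.finrank ℝ H.direction <
        Module.finrank ℝ ↥(H.direction ⊔ Submodule.span ℝ {v - x}) :=
      Submodule.finrank_lt_finrank_of_lt hlt
    have h2 : Module.finrank ℝ ↥(H.direction ⊔ Submodule.span ℝ {v - x}) ≤ n := by
      have := Submodule.finrank_le (H.direction ⊔ Submodule.span ℝ {v - x})
      simpa [finrank_euclideanSpace_fin] using this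
    have h3 : Module.finrank ℝ ↥(H.direction ⊔ Submodule.span ℝ {v - x}) = n := by omega
    apply Submodule.eq_top_of_finrank_eq
    simpa [finrank_euclideanSpace_fin] using h3
  have hxp : x - p ∈ H.direction ⊔ Submodule.span ℝ {v - x} := htop ▸ Submodule.mem_top
  obtain ⟨d, hd, s, hs, hds⟩ := Submodule.mem_sup.mp hxp
  obtain ⟨a, rfl⟩ := Submodule.mem_span_singleton.mp hs
  refine ⟨-a, ?_, ?_⟩
  · have heq : x + (-a) • (v - x) = d +ᵥ p := by
      rw [eq_sub_of_add_eq hds, vadd_eq_add]; module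
    rw [heq]
    exact AffineSubspace.vadd_mem_of_mem_direction hd hp
  · have heq : x + (-a) • (v - x) = AffineMap.lineMap x v (-a : ℝ) := by
      rw [AffineMap.lineMap_apply]
      simp only [vsub_eq_sub, vadd_eq_add]; module
    rw [heq]
    exact AffineMap.lineMap_mem_affineSpan_pair _ _ _

lemma key_facts {n : ℕ} (μ₀ μ₁ : Measure (Euc n))
    (h₀ : msupp μ₀ ⊆ closedBall 0 1) (h₁ : msupp μ₁ ⊆ closedBall 0 1)
    (G : Set (Euc n × Euc n)) (hGsub : G ⊆ (msupp μ₀) ×ˢ (msupp μ₁))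
    (H : AffineSubspace ℝ (Euc n)) (hHne : (H : Set (Euc n)).Nonempty)
    (hHdim : Module.finrank ℝ H.direction + 1 = n)
    (C' : ℝ) (hC' : 0 < C')
    (hHdist : ∀ z ∈ (H : Set (Euc n)), ∀ y ∈ msupp μ₀ ∪ msupp μ₁, 1 / C' ≤ dist z y)
    (x : Euc n) (hx : x ∈ msupp μ₀) (f : Euc n → Euc n)
    (hf : ∀ y z : Euc n, z ∈ H → z ∈ affineSpan ℝ ({x, y} : Set (Euc n)) → f y = z)
    (v : Euc n) (hvG : (x, v) ∈ G) (hvpar : v -ᵥ x ∉ H.direction) :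
    ∃ c : ℝ, c ≠ 0 ∧ f v = x + c • (v - x) ∧ f v ∈ H ∧
      f v ∈ affineSpan ℝ ({x, v} : Set (Euc n)) ∧ ‖v - x‖ ≤ 2 ∧
      1 / C' ≤ ‖f v - x‖ := by
  obtain ⟨c, hcH, hcspan⟩ := aux_inter H hHne hHdim x v hvpar
  have hfv : f v = x + c • (v - x) := hf v _ hcH hcspan
  have hvsupp : v ∈ msupp μ₁ := (hGsub hvG).2
  have hv1 : ‖v‖ ≤ 1 := by simpa [mem_closedBall, dist_zero_right] using h₁ hvsupp
  have hx1 : ‖x‖ ≤ 1 := by simpa [mem_closedBall, dist_zero_right] using h₀ hx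
  have hfvH : f v ∈ H := by rw [hfv]; exact hcH
  have hdistfv : 1 / C' ≤ ‖f v - x‖ := by
    have := hHdist (f v) hfvH x (Set.mem_union_left _ hx)
    simpa [dist_eq_norm] using this
  have hc0 : c ≠ 0 := by
    intro h
    rw [h, zero_smul, add_zero] at hfv
    have h1 : (0:ℝ) < 1 / C' := by positivity
    rw [hfv] at hdistfv
    simp only [sub_self, norm_zero] at hdistfv
    linarith
  refine ⟨c, hc0, hfv, hfvH, by rw [hfv]; exact hcspan, ?_, hdistfv⟩
  calc ‖v - x‖ ≤ ‖v‖ + ‖x‖ := norm_sub_le _ _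
  _ ≤ 2 := by linarith

/-- Radial projections of thin-line graphs are Frostman. Let `G` be a graph
with the thin-lines property for `(μ₀, μ₁)`, and `H` a hyperplane at distance `≥ 1/C'` from the
supports. Then there is `A = A(n, C')` such that for every `x ∈ supp μ₀`, the pushforward under
the radial projection `π_x` (any measurable map `f` realizing it) of `μ₁` restricted to the
section `G|_x` (off the translate of `dir H` through `x`) is `(A^σ·K, σ)`-Frostman on `H`. -/
theorem stmt_18 {n : ℕ} (μ₀ μ₁ : Measure (Euc n))
    [IsProbabilityMeasure μ₀] [IsProbabilityMeasure μ₁]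
    (h₀ : msupp μ₀ ⊆ closedBall 0 1) (h₁ : msupp μ₁ ⊆ closedBall 0 1)
    (G : Set (Euc n × Euc n)) (hGmeas : MeasurableSet G)
    (hGsub : G ⊆ (msupp μ₀) ×ˢ (msupp μ₁))
    (σ K : ℝ) (hσ : 0 < σ) (hK : 0 < K)
    (hthin : ∀ p ∈ G, ∀ δ : ℝ, 0 < δ →
      μ₀ (thickening δ
          ((affineSpan ℝ ({p.1, p.2} : Set (Euc n)) : AffineSubspace ℝ (Euc n)) :
            Set (Euc n))) ≤ ENNReal.ofReal (K * δ ^ σ) ∧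
      μ₁ (thickening δ
          ((affineSpan ℝ ({p.1, p.2} : Set (Euc n)) : AffineSubspace ℝ (Euc n)) :
            Set (Euc n))) ≤ ENNReal.ofReal (K * δ ^ σ))
    (H : AffineSubspace ℝ (Euc n)) (hHne : (H : Set (Euc n)).Nonempty)
    (hHdim : Module.finrank ℝ H.direction + 1 = n)
    (C' : ℝ) (hC' : 0 < C')
    (hHdist : ∀ z ∈ (H : Set (Euc n)), ∀ y ∈ msupp μ₀ ∪ msupp μ₁, 1 / C' ≤ dist z y) :
    ∃ A : ℝ, 0 < A ∧
      ∀ x ∈ msupp μ₀, ∀ f : Euc n → Euc n, Measurable f →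
        (∀ y z : Euc n, z ∈ H → z ∈ affineSpan ℝ ({x, y} : Set (Euc n)) → f y = z) →
        ∀ y ∈ (H : Set (Euc n)), ∀ δ : ℝ, 0 < δ →
          Measure.map f
              (μ₁.restrict ({x₁ | (x, x₁) ∈ G} \ {v : Euc n | v -ᵥ x ∈ H.direction}))
              (ball y δ) ≤ ENNReal.ofReal (A ^ σ * K * δ ^ σ) := by
  refine ⟨4 * C' + 1, by positivity, ?_⟩
  intro x hx f hfmeas hf y hy δ hδ
  set S : Set (Euc n) := {x₁ | (x, x₁) ∈ G} \ {v : Euc n | v -ᵥ x ∈ H.direction} with hS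
  rw [Measure.map_apply hfmeas measurableSet_ball,
      Measure.restrict_apply (hfmeas measurableSet_ball)]
  rcases Set.eq_empty_or_nonempty (f ⁻¹' ball y δ ∩ S) with he | ⟨x₁, hx₁b, hx₁G, hx₁par⟩
  · rw [he, measure_empty]; exact zero_le
  obtain ⟨c, hc0, hz, hzH, hzspan, -, -⟩ :=
    key_facts μ₀ μ₁ h₀ h₁ G hGsub H hHne hHdim C' hC' hHdist x hx f hf x₁ hx₁G hx₁par
  have hsub : f ⁻¹' ball y δ ∩ S ⊆
      thickening ((4 * C' + 1) * δ) ((affineSpan ℝ ({x, x₁} : Set (Euc n)) :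
        AffineSubspace ℝ (Euc n)) : Set (Euc n)) := by
    rintro v ⟨hvb, hvG, hvpar⟩
    obtain ⟨c', hc'0, hz', -, -, hv2, hz'dist⟩ :=
      key_facts μ₀ μ₁ h₀ h₁ G hGsub H hHne hHdim C' hC' hHdist x hx f hf v hvG hvpar
    have hvx : v - x = (c')⁻¹ • (f v - x) := by
      rw [hz', add_sub_cancel_left, smul_smul, inv_mul_cancel₀ hc'0, one_smul]
    have hnorm : ‖v - x‖ = |(c')⁻¹| * ‖f v - x‖ := by
      rw [hvx, norm_smul, Real.norm_eq_abs]
    have ht : |(c')⁻¹| ≤ 2 * C' := by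
      have h1 : |(c')⁻¹| * (1 / C') ≤ |(c')⁻¹| * ‖f v - x‖ :=
        mul_le_mul_of_nonneg_left hz'dist (abs_nonneg _)
      have h2 : |(c')⁻¹| * (1 / C') ≤ 2 := by rw [← hnorm] at h1; linarith
      have h3 := mul_le_mul_of_nonneg_right h2 hC'.le
      calc |(c')⁻¹| = |(c')⁻¹| * (1 / C') * C' := by field_simp
      _ ≤ 2 * C' := h3
    have hxmem : x ∈ affineSpan ℝ ({x, x₁} : Set (Euc n)) :=
      mem_affineSpan ℝ (Set.mem_insert _ _)
    have hpmem : (c')⁻¹ • (f x₁ -ᵥ x) +ᵥ x ∈ affineSpan ℝ ({x, x₁} : Set (Euc n)) :=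
      AffineSubspace.smul_vsub_vadd_mem _ (c')⁻¹ hzspan hxmem hxmem
    refine Metric.mem_thickening_iff.mpr ⟨_, hpmem, ?_⟩
    have hdistz : dist (f v) (f x₁) < 2 * δ := by
      have hb1 : dist (f v) y < δ := hvb
      have hb2 : dist (f x₁) y < δ := hx₁b
      calc dist (f v) (f x₁) ≤ dist (f v) y + dist y (f x₁) := dist_triangle _ _ _
      _ < 2 * δ := by rw [dist_comm y]; linarith
    have hdeq : dist v ((c')⁻¹ • (f x₁ -ᵥ x) +ᵥ x) = |(c')⁻¹| * dist (f v) (f x₁) := by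
      rw [dist_eq_norm, dist_eq_norm]
      have h1 : v - ((c')⁻¹ • (f x₁ -ᵥ x) +ᵥ x) = (v - x) - (c')⁻¹ • (f x₁ - x) := by
        simp only [vsub_eq_sub, vadd_eq_add]; abel
      have h2 : (c')⁻¹ • (f v - x) - (c')⁻¹ • (f x₁ - x) = (c')⁻¹ • (f v - f x₁) := by
        module
      rw [h1, hvx, h2, norm_smul, Real.norm_eq_abs]
    rw [hdeq]
    nlinarith [abs_nonneg (c')⁻¹, dist_nonneg (x := f v) (y := f x₁),
      mul_le_mul_of_nonneg_right ht (dist_nonneg (x := f v) (y := f x₁))]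
  calc μ₁ (f ⁻¹' ball y δ ∩ S)
      ≤ μ₁ (thickening ((4 * C' + 1) * δ) ((affineSpan ℝ ({x, x₁} : Set (Euc n)) :
        AffineSubspace ℝ (Euc n)) : Set (Euc n))) := measure_mono hsub
    _ ≤ ENNReal.ofReal (K * ((4 * C' + 1) * δ) ^ σ) :=
        (hthin (x, x₁) hx₁G ((4 * C' + 1) * δ) (by positivity)).2
    _ = ENNReal.ofReal ((4 * C' + 1) ^ σ * K * δ ^ σ) := by
        rw [Real.mul_rpow (by positivity) hδ.le]; ring_nf
end
end

section
/- Let μ_1,…,μ_n be probability measures on ℝ^n and let G ⊆ supp μ_1 × ⋯ × supp μ_n be a Borel set with (μ_1×⋯×μ_n)(G) ≥ 1−ε such that for every (x_1,…,x_n) ∈ G, every δ > 0 and every j, μ_j of the δ-neighborhood of the affine span of x_1,…,x_n is at most K·δ^σ (with σ, K > 0 and 0 < ε < 1/2). For each i define E_i = { x ∈ supp μ_i : (∏_{i' ≠ i} μ_{i'})(G|_{x_i = x}) ≥ 1/2 }, where G|_{x_i = x} is the section of G at x in the i-th coordinate. Then μ_i(E_i) ≥ 1 − 2ε, and the restricted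 measure μ_i|_{E_i} is (2^σ·K, σ)-Frostman: μ_i(E_i ∩ B(y,δ)) ≤ 2^σ·K·δ^σ for every y ∈ ℝ^n and δ > 0. -/
open MeasureTheory Metric Set

noncomputable section

/-- Combine a point `x` in slot `i` with a tuple `y` on the remaining slots. -/
def combineAt {n : ℕ} (i : Fin n) (x : Euc n) (y : {i' : Fin n // i' ≠ i} → Euc n) :
    Fin n → Euc n :=
  fun i' => if h : i' = i then x else y ⟨i', h⟩

/-- The set `E_i` of points of `supp (μ i)` whose section of `G` has measure at least `1/2`. -/
def goodSection {n : ℕ} (μ : Fin n → Measure (Euc n)) (G : Set (Fin n → Euc n)) (i : Fin n) :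
    Set (Euc n) :=
  {x | x ∈ msupp (μ i) ∧
    (1 : ENNReal) / 2 ≤
      Measure.pi (fun i' : {i' : Fin n // i' ≠ i} => μ i'.1) {y | combineAt i x y ∈ G}}


section Aux
variable {n : ℕ}

lemma isClosed_msupp (μ : Measure (Euc n)) : IsClosed (msupp μ) := by
  rw [← isOpen_compl_iff, Metric.isOpen_iff]
  intro x hx
  simp only [msupp, mem_compl_iff, mem_setOf_eq, not_forall] at hx
  obtain ⟨r, hr, hball⟩ := hx
  rw [not_lt, le_zero_iff] at hball
  refine ⟨r / 2, by positivity, fun y hy => ?_⟩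
  simp only [msupp, mem_compl_iff, mem_setOf_eq, not_forall]
  refine ⟨r / 2, by positivity, ?_⟩
  rw [not_lt, le_zero_iff]
  refine measure_mono_null (fun z hz => ?_) hball
  have : dist z x < r := by
    calc dist z x ≤ dist z y + dist y x := dist_triangle _ _ _
    _ < r / 2 + r / 2 := add_lt_add (mem_ball.mp hz) (mem_ball.mp hy)
    _ = r := by ring
  exact mem_ball.mpr this

lemma msupp_compl_null (μ : Measure (Euc n)) : μ (msupp μ)ᶜ = 0 := by
  apply measure_null_of_locally_null
  intro x hx
  simp only [msupp, mem_compl_iff, mem_setOf_eq, not_forall] at hx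
  obtain ⟨r, hr, hball⟩ := hx
  rw [not_lt, le_zero_iff] at hball
  exact ⟨ball x r, mem_nhdsWithin_of_mem_nhds (ball_mem_nhds x hr), hball⟩

variable (i : Fin n)

instance uniqEq : Unique {i' : Fin n // i' = i} :=
  ⟨⟨⟨i, rfl⟩⟩, fun j => Subtype.ext j.2⟩

/-- The measurable equivalence splitting off the `i`-th coordinate. -/
def splitEquiv : (Fin n → Euc n) ≃ᵐ (Euc n) × ({i' : Fin n // i' ≠ i} → Euc n) :=
  (MeasurableEquiv.piEquivPiSubtypeProd (fun _ : Fin n => Euc n) (fun i' => i' = i)).trans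
    ((MeasurableEquiv.piUnique (fun _ : {i' : Fin n // i' = i} => Euc n)).prodCongr
      (MeasurableEquiv.refl _))

lemma splitEquiv_symm_apply (x : Euc n) (y : {i' : Fin n // i' ≠ i} → Euc n) :
    (splitEquiv i).symm (x, y) = combineAt i x y := by
  funext i'
  simp only [splitEquiv, MeasurableEquiv.trans, MeasurableEquiv.symm, MeasurableEquiv.prodCongr,
    MeasurableEquiv.piEquivPiSubtypeProd, MeasurableEquiv.piUnique, MeasurableEquiv.refl,
    MeasurableEquiv.coe_mk, Equiv.symm_trans_apply, Equiv.prodCongr_symm, Equiv.prodCongr_apply,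
    Equiv.symm_symm, Prod.map, Equiv.piEquivPiSubtypeProd_symm_apply, combineAt]
  by_cases h : i' = i <;> simp [h, Equiv.piUnique]

lemma splitEquiv_mp (μ : Fin n → Measure (Euc n)) [∀ j, SigmaFinite (μ j)] :
    MeasurePreserving (splitEquiv i) (Measure.pi μ)
      ((μ i).prod (Measure.pi (fun i' : {i' : Fin n // i' ≠ i} => μ i'.1))) := by
  have h1 := measurePreserving_piEquivPiSubtypeProd μ (fun i' => i' = i)
  unfold splitEquiv
  rw [MeasurableEquiv.coe_trans]
  refine MeasurePreserving.comp ?_ h1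
  refine MeasurePreserving.prod ?_ (MeasurePreserving.id _)
  convert measurePreserving_piUnique (fun i' : {i' : Fin n // i' = i} => μ i'.1) using 2
  · rfl
  · exact (default : {i' : Fin n // i' = i}).2.symm

end Aux

/-- Sections of a thin hyperplane graph give restricted Frostman measures.
If `G` is a `(σ, K, 1-ε)`-thin hyperplanes graph for `μ 1, …, μ n` with `ε < 1/2`, then each
set `E i = goodSection μ G i` satisfies `μ i (E i) ≥ 1 - 2ε` and `μ i` restricted to `E i` is
`(2^σ·K, σ)`-Frostman. -/
theorem stmt_19 {n : ℕ} (μ : Fin n → Measure (Euc n))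
    (hprob : ∀ i, IsProbabilityMeasure (μ i))
    (σ K ε : ℝ) (hσ : 0 < σ) (hK : 0 < K) (hε0 : 0 < ε) (hε : ε < 1 / 2)
    (G : Set (Fin n → Euc n)) (hGmeas : MeasurableSet G)
    (hGsub : G ⊆ Set.univ.pi fun i => msupp (μ i))
    (hGbig : ENNReal.ofReal (1 - ε) ≤ Measure.pi μ G)
    (hthin : ∀ x ∈ G, ∀ δ : ℝ, 0 < δ → ∀ j,
      μ j (thickening δ
          ((affineSpan ℝ (Set.range x) : AffineSubspace ℝ (Euc n)) : Set (Euc n))) ≤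
        ENNReal.ofReal (K * δ ^ σ)) :
    ∀ i, ENNReal.ofReal (1 - 2 * ε) ≤ μ i (goodSection μ G i) ∧
      ∀ (y : Euc n) (δ : ℝ), 0 < δ →
        μ i (goodSection μ G i ∩ ball y δ) ≤ ENNReal.ofReal (2 ^ σ * K * δ ^ σ) := by
  intro i
  haveI : ∀ j, IsProbabilityMeasure (μ j) := hprob
  set ν := Measure.pi (fun i' : {i' : Fin n // i' ≠ i} => μ i'.1) with hν
  have he := splitEquiv_mp i μ
  set S := (splitEquiv i).symm ⁻¹' G with hSdef
  have hS : MeasurableSet S := (splitEquiv i).symm.measurable hGmeas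
  have hsect : ∀ x : Euc n, {y | combineAt i x y ∈ G} = Prod.mk x ⁻¹' S := by
    intro x
    ext y
    simp only [mem_setOf_eq, mem_preimage, hSdef, ← splitEquiv_symm_apply i x y]
  set F : Euc n → ENNReal := fun x => ν (Prod.mk x ⁻¹' S) with hF
  have hFmeas : Measurable F := measurable_measure_prodMk_left hS
  have hprodG : Measure.pi μ G = ((μ i).prod ν) S := by
    rw [← he.map_eq, MeasurableEquiv.map_apply]
    congr 1
    ext z
    simp [hSdef]
  have hGpi : Measure.pi μ G = ∫⁻ x, F x ∂ μ i := by
    rw [hprodG, Measure.prod_apply hS]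
  have hGcpi : Measure.pi μ Gᶜ = ∫⁻ x, (1 - F x) ∂ μ i := by
    have h1 : Measure.pi μ Gᶜ = ((μ i).prod ν) Sᶜ := by
      rw [← he.map_eq, MeasurableEquiv.map_apply]
      congr 1
      ext z
      simp [hSdef]
    rw [h1, Measure.prod_apply hS.compl]
    apply lintegral_congr
    intro x
    rw [show Prod.mk x ⁻¹' Sᶜ = (Prod.mk x ⁻¹' S)ᶜ from rfl,
      measure_compl (measurable_prodMk_left hS) (measure_ne_top _ _), measure_univ]
  have hGc : Measure.pi μ Gᶜ ≤ ENNReal.ofReal ε := by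
    rw [measure_compl hGmeas (measure_ne_top _ _), measure_univ]
    calc 1 - Measure.pi μ G ≤ 1 - ENNReal.ofReal (1 - ε) := tsub_le_tsub_left hGbig 1
    _ = ENNReal.ofReal ε := by
        rw [← ENNReal.ofReal_one, ← ENNReal.ofReal_sub _ (by linarith)]
        norm_num
  set B := {x : Euc n | F x < 2⁻¹} with hBdef
  have hBmeas : MeasurableSet B := measurableSet_lt hFmeas measurable_const
  have hBhalf : 2⁻¹ * μ i B ≤ ENNReal.ofReal ε := by
    calc (2⁻¹ : ENNReal) * μ i B = ∫⁻ _ in B, 2⁻¹ ∂ μ i := (setLIntegral_const B 2⁻¹).symm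
    _ ≤ ∫⁻ x in B, (1 - F x) ∂ μ i := by
        refine setLIntegral_mono' hBmeas (fun x hx => ?_)
        calc (2⁻¹ : ENNReal) = 1 - 2⁻¹ := ENNReal.one_sub_inv_two.symm
        _ ≤ 1 - F x := tsub_le_tsub_left hx.le 1
    _ ≤ ∫⁻ x, (1 - F x) ∂ μ i := setLIntegral_le_lintegral _ _
    _ = Measure.pi μ Gᶜ := hGcpi.symm
    _ ≤ ENNReal.ofReal ε := hGc
  have hB : μ i B ≤ ENNReal.ofReal (2 * ε) := by
    have h2 := mul_le_mul_right hBhalf 2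
    rw [← mul_assoc, ENNReal.mul_inv_cancel (by norm_num) (by norm_num), one_mul] at h2
    calc μ i B ≤ 2 * ENNReal.ofReal ε := h2
    _ = ENNReal.ofReal (2 * ε) := by
        rw [ENNReal.ofReal_mul (by norm_num)]
        norm_num
  have hEeq : goodSection μ G i = msupp (μ i) ∩ {x | 2⁻¹ ≤ F x} := by
    ext x
    simp only [goodSection, mem_setOf_eq, mem_inter_iff, hsect x, hF, one_div]
    exact Iff.rfl
  have hEmeas : MeasurableSet (goodSection μ G i) := by
    rw [hEeq]
    exact (isClosed_msupp _).measurableSet.inter (measurableSet_le measurable_const hFmeas)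
  have hEc : μ i (goodSection μ G i)ᶜ ≤ ENNReal.ofReal (2 * ε) := by
    have hceq : (goodSection μ G i)ᶜ = (msupp (μ i))ᶜ ∪ B := by
      rw [hEeq, compl_inter]
      congr 1
      ext x
      simp [hBdef, not_le]
    calc μ i (goodSection μ G i)ᶜ = μ i ((msupp (μ i))ᶜ ∪ B) := by rw [hceq]
    _ ≤ μ i (msupp (μ i))ᶜ + μ i B := measure_union_le _ _
    _ = μ i B := by rw [msupp_compl_null, zero_add]
    _ ≤ ENNReal.ofReal (2 * ε) := hB
  constructor
  · have h1 := measure_compl hEmeas.compl (measure_ne_top (μ i) (goodSection μ G i)ᶜ)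
    rw [compl_compl, measure_univ] at h1
    calc ENNReal.ofReal (1 - 2 * ε) = 1 - ENNReal.ofReal (2 * ε) := by
          rw [← ENNReal.ofReal_one, ← ENNReal.ofReal_sub _ (by linarith)]
    _ ≤ 1 - μ i (goodSection μ G i)ᶜ := tsub_le_tsub_left hEc 1
    _ = μ i (goodSection μ G i) := h1.symm
  · intro y δ hδ
    rcases (goodSection μ G i ∩ ball y δ).eq_empty_or_nonempty with h | ⟨x, hxE, hxball⟩
    · simp [h]
    · have hx2 := hxE.2
      have hne : {y' | combineAt i x y' ∈ G}.Nonempty := by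
        rw [nonempty_iff_ne_empty]
        intro hemp
        rw [hemp] at hx2
        simp at hx2
      obtain ⟨yy, hyy⟩ := hne
      have hz : combineAt i x yy ∈ G := hyy
      have hxz : x ∈ (affineSpan ℝ (Set.range (combineAt i x yy)) : Set (Euc n)) := by
        apply subset_affineSpan
        exact ⟨i, by simp [combineAt]⟩
      have hsub : goodSection μ G i ∩ ball y δ ⊆
          thickening (2 * δ)
            ((affineSpan ℝ (Set.range (combineAt i x yy)) : AffineSubspace ℝ (Euc n)) :
              Set (Euc n)) := by
        intro w hw
        have hwx : dist w x < 2 * δ := by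
          calc dist w x ≤ dist w y + dist y x := dist_triangle _ _ _
          _ < δ + δ := add_lt_add (mem_ball.mp hw.2) (by
                rw [dist_comm]; exact mem_ball.mp hxball)
          _ = 2 * δ := by ring
        exact ball_subset_thickening hxz (2 * δ) (mem_ball.mpr hwx)
      calc μ i (goodSection μ G i ∩ ball y δ)
          ≤ μ i (thickening (2 * δ)
            ((affineSpan ℝ (Set.range (combineAt i x yy)) : AffineSubspace ℝ (Euc n)) :
              Set (Euc n))) := measure_mono hsub
      _ ≤ ENNReal.ofReal (K * (2 * δ) ^ σ) := hthin _ hz (2 * δ) (by linarith) i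
      _ = ENNReal.ofReal (2 ^ σ * K * δ ^ σ) := by
          rw [Real.mul_rpow (by norm_num) hδ.le]
          congr 1
          ring
end
end
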